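/- arXiv:2402.00301 — 2 statements merged into one kernel-verified Lean document; each statement's English description precedes it below -/
import Mathlib

section
/- Existence of two secants through any point: Let κ be a conic, and assume Axiom P. Then through any given point P of the plane there exist two distinct secants of κ, i.e., there exist distinct lines s₁ ≠ s₂, each passing through P, and each passing through two distinct points of κ. -/
open Configuration

universe u
variable (P L : Type u) [Membership P L]

/-- Three points are collinear if some line passes through all three. -/
def Col (A B C : P) : Prop := ∃ l : L, A ∈ l ∧ B ∈ l ∧ C ∈ l

/-- Every line of `L` is incident with at least `n` distinct points. -/
def LinesHaveAtLeast (n : ℕ) : Prop :=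
  ∀ l : L, ∃ s : Finset P, n ≤ s.card ∧ ∀ X ∈ s, X ∈ l

/-- An object of the plane: the range of a line or the pencil of a point. -/
inductive Obj (P L : Type u) where
  | range : L → Obj P L
  | pencil : P → Obj P L

/-- The carrier of an object: the points on the line, resp. the lines through
the point. -/
abbrev Obj.Carrier {P L : Type u} [Membership P L] : Obj P L → Type u
  | .range l => {X : P // X ∈ l}
  | .pencil U => {k : L // U ∈ k}

/-- `f` is the perspectivity from the range of `l` to the range of `m` with
center `O`, a point outside both `l` and `m` : each point `X` of `l` is mapped
to the point `(OX)·m`, i.e. `O`, `X` and `f X` are collinear. -/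
def IsRangePersp (l m : L) (f : {X : P // X ∈ l} → {Y : P // Y ∈ m}) : Prop :=
  ∃ O : P, O ∉ l ∧ O ∉ m ∧
    ∀ X : {X : P // X ∈ l}, ∃ k : L, O ∈ k ∧ (X : P) ∈ k ∧ ((f X : P)) ∈ k

/-- `f` is the elementary map from the pencil of `U` to the range of a line `l`
not through `U` : each line `k` through `U` is sent to the point `k·l`. -/
def IsElemMap (U : P) (l : L) (f : {k : L // U ∈ k} → {X : P // X ∈ l}) : Prop :=
  U ∉ l ∧ ∀ k : {k : L // U ∈ k}, ((f k : P)) ∈ (k : L)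

/-- `f` is the elementary map from the range of a line `l` to the pencil of a
point `U` outside `l` : each point `X` of `l` is sent to the line `UX`. -/
def IsElemInv (U : P) (l : L) (f : {X : P // X ∈ l} → {k : L // U ∈ k}) : Prop :=
  U ∉ l ∧ ∀ X : {X : P // X ∈ l}, (X : P) ∈ ((f X : L))

/-- A projectivity (between ranges or pencils) : a composite of finitely many
perspectivities and elementary maps. -/
inductive IsProj : (a b : Obj P L) → (a.Carrier → b.Carrier) → Prop where
  | persp {l m : L} {f : {X : P // X ∈ l} → {Y : P // Y ∈ m}} :
      IsRangePersp P L l m f → IsProj (.range l) (.range m) f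
  | elem {U : P} {l : L} {f : {k : L // U ∈ k} → {X : P // X ∈ l}} :
      IsElemMap P L U l f → IsProj (.pencil U) (.range l) f
  | elemInv {U : P} {l : L} {f : {X : P // X ∈ l} → {k : L // U ∈ k}} :
      IsElemInv P L U l f → IsProj (.range l) (.pencil U) f
  | comp {a b c : Obj P L} {f : a.Carrier → b.Carrier} {g : b.Carrier → c.Carrier} :
      IsProj a b f → IsProj b c g → IsProj a c (g ∘ f)

/-- Axiom T: every projectivity of a range or a pencil onto itself having three
distinct fixed elements is the identity. -/
def AxiomT : Prop :=
  ∀ (a : Obj P L) (f : a.Carrier → a.Carrier), IsProj P L a a f →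
    (∃ x y z : a.Carrier, x ≠ y ∧ x ≠ z ∧ y ≠ z ∧ f x = x ∧ f y = y ∧ f z = z) →
    ∀ w, f w = w

/-- The Steiner conic `κ(π;U,V)` defined by a projectivity `π : U* → V*` :
the locus of points `l·π(l)` for `l` a line through `U`. -/
def conicSet (U V : P) (π : {k : L // U ∈ k} → {k : L // V ∈ k}) : Set P :=
  {X : P | ∃ k : {k : L // U ∈ k}, X ∈ (k : L) ∧ X ∈ ((π k : L))}

/-- A conic: the Steiner conic of some nonperspective projectivity between the
pencils of two distinct points. -/
def IsConic (κ : Set P) : Prop :=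
  ∃ (U V : P) (π : {k : L // U ∈ k} → {k : L // V ∈ k}),
    U ≠ V ∧ IsProj P L (.pencil U) (.pencil V) π ∧
    (∀ k : {k : L // U ∈ k}, ((π k : L)) ≠ (k : L)) ∧
    κ = conicSet P L U V π

/-- A line `t` is tangent to `κ` at `Q` if `Q` is on `κ` and on `t`, and is the
only point of `κ` incident with `t`. -/
def IsTangent (κ : Set P) (t : L) (Q : P) : Prop :=
  Q ∈ κ ∧ Q ∈ t ∧ ∀ X ∈ κ, X ∈ t → X = Q

/-- A line is a secant of `κ` if it passes through two distinct points of `κ`. -/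
def IsSecant (κ : Set P) (s : L) : Prop :=
  ∃ X Y : P, X ≠ Y ∧ X ∈ κ ∧ Y ∈ κ ∧ X ∈ s ∧ Y ∈ s

/-- Axiom P: the tangents to a conic at any three distinct points of the conic
are nonconcurrent. -/
def AxiomP : Prop :=
  ∀ κ : Set P, IsConic P L κ →
    ∀ X Y Z : P, X ∈ κ → Y ∈ κ → Z ∈ κ → X ≠ Y → X ≠ Z → Y ≠ Z →
      ∀ tx ty tz : L, IsTangent P L κ tx X → IsTangent P L κ ty Y → IsTangent P L κ tz Z →
        ¬ ∃ W : P, W ∈ tx ∧ W ∈ ty ∧ W ∈ tz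


section Aux

variable {P L : Type u} [Membership P L] [Configuration.ProjectivePlane P L]

open Configuration.HasLines (mkLine mkLine_ax)
open Configuration.HasPoints (mkPoint mkPoint_ax)

/-- Two distinct points lie on a unique line. -/
lemma line_unique {A B : P} {l m : L} (hAB : A ≠ B)
    (hAl : A ∈ l) (hBl : B ∈ l) (hAm : A ∈ m) (hBm : B ∈ m) : l = m :=
  (Nondegenerate.eq_or_eq hAl hBl hAm hBm).resolve_left hAB

/-- Two distinct lines meet in a unique point. -/
lemma point_unique {A B : P} {l m : L} (hlm : l ≠ m)
    (hAl : A ∈ l) (hBl : B ∈ l) (hAm : A ∈ m) (hBm : B ∈ m) : A = B :=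
  (Nondegenerate.eq_or_eq hAl hBl hAm hBm).resolve_right hlm

/-- Every projectivity is injective. -/
lemma IsProj.inj {a b : Obj P L} {f : a.Carrier → b.Carrier}
    (h : IsProj P L a b f) : Function.Injective f := by
  induction h with
  | @persp l m f h =>
    obtain ⟨O, hOl, hOm, hf⟩ := h
    intro X X' hXX'
    obtain ⟨k, hOk, hXk, hfk⟩ := hf X
    obtain ⟨k', hOk', hXk', hfk'⟩ := hf X'
    rw [hXX'] at hfk
    have hOfX : O ≠ (f X' : P) := fun e => hOm (e ▸ (f X').2)
    have hkk' : k = k' := line_unique hOfX hOk hfk hOk' hfk'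
    rw [hkk'] at hXk
    have hlk : l ≠ k' := fun e => hOl (e ▸ hOk')
    exact Subtype.ext (point_unique hlk X.2 X'.2 hXk hXk')
  | @elem U l f h =>
    obtain ⟨hUl, hf⟩ := h
    intro k k' hkk'
    have h1 := hf k
    have h2 := hf k'
    rw [hkk'] at h1
    have hUfk : U ≠ (f k' : P) := fun e => hUl (e ▸ (f k').2)
    exact Subtype.ext (line_unique hUfk k.2 h1 k'.2 h2)
  | @elemInv U l f h =>
    obtain ⟨hUl, hf⟩ := h
    intro X X' hXX'
    have h1 := hf X
    have h2 := hf X'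
    rw [hXX'] at h1
    have hlf : l ≠ (f X' : L) := fun e => hUl (e ▸ (f X').2)
    exact Subtype.ext (point_unique hlf X.2 X'.2 h1 h2)
  | comp _ _ ih1 ih2 => exact ih2.comp ih1

/-- A line meets a conic in at most two points. -/
lemma conic_le_two {U V : P} {π : {k : L // U ∈ k} → {k : L // V ∈ k}}
    (hUV : U ≠ V) (hπ : IsProj P L (.pencil U) (.pencil V) π)
    (hnp : ∀ k : {k : L // U ∈ k}, ((π k : L)) ≠ (k : L))
    (hT : AxiomT P L) {s : L} {X Y Z : P}
    (hX : X ∈ conicSet P L U V π) (hY : Y ∈ conicSet P L U V π)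
    (hZ : Z ∈ conicSet P L U V π)
    (hXs : X ∈ s) (hYs : Y ∈ s) (hZs : Z ∈ s)
    (hXY : X ≠ Y) (hXZ : X ≠ Z) (hYZ : Y ≠ Z) : False := by
  by_cases hUs : U ∈ s
  · -- pick two of X, Y, Z different from U
    have key : ∀ A B : P, A ∈ conicSet P L U V π → B ∈ conicSet P L U V π →
        A ∈ s → B ∈ s → A ≠ B → A ≠ U → B ≠ U → False := by
      intro A B hA hB hAs hBs hAB hAU hBU
      obtain ⟨kA, hAk, hAπk⟩ := hA
      obtain ⟨kB, hBk, hBπk⟩ := hB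
      have hkA : (kA : L) = s := line_unique (Ne.symm hAU) kA.2 hAk hUs hAs
      have hkB : (kB : L) = s := line_unique (Ne.symm hBU) kB.2 hBk hUs hBs
      have hkAB : kA = kB := Subtype.ext (hkA.trans hkB.symm)
      rw [hkAB] at hAπk
      have : ((π kB : L)) = s := line_unique hAB hAπk hBπk hAs hBs
      exact hnp kB (this.trans hkB.symm)
    rcases eq_or_ne X U with rfl | hXU
    · exact key Y Z hY hZ hYs hZs hYZ (Ne.symm hXY) (Ne.symm hXZ)
    · rcases eq_or_ne Y U with rfl | hYU
      · exact key X Z hX hZ hXs hZs hXZ hXU (Ne.symm hYZ)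
      · exact key X Y hX hY hXs hYs hXY hXU hYU
  · by_cases hVs : V ∈ s
    · have key : ∀ A B : P, A ∈ conicSet P L U V π → B ∈ conicSet P L U V π →
          A ∈ s → B ∈ s → A ≠ B → A ≠ V → B ≠ V → False := by
        intro A B hA hB hAs hBs hAB hAV hBV
        obtain ⟨kA, hAk, hAπk⟩ := hA
        obtain ⟨kB, hBk, hBπk⟩ := hB
        have hπA : ((π kA : L)) = s := line_unique hAV hAπk (π kA).2 hAs hVs
        have hπB : ((π kB : L)) = s := line_unique hBV hBπk (π kB).2 hBs hVs
        have : kA = kB := hπ.inj (Subtype.ext (hπA.trans hπB.symm))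
        rw [this] at hAk
        have : (kB : L) = s := line_unique hAB hAk hBk hAs hBs
        exact hUs (this ▸ kB.2)
      rcases eq_or_ne X V with rfl | hXV
      · exact key Y Z hY hZ hYs hZs hYZ (Ne.symm hXY) (Ne.symm hXZ)
      · rcases eq_or_ne Y V with rfl | hYV
        · exact key X Z hX hZ hXs hZs hXZ hXV (Ne.symm hYZ)
        · exact key X Y hX hY hXs hYs hXY hXV hYV
    · -- main case: U ∉ s, V ∉ s; build a projectivity of the range of s
      have hUne : ∀ W : {W : P // W ∈ s}, U ≠ (W : P) := fun W e => hUs (e ▸ W.2)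
      have hne2 : ∀ k : {k : L // V ∈ k}, (k : L) ≠ s := fun k e => hVs (e ▸ k.2)
      let e₁ : {W : P // W ∈ s} → {k : L // U ∈ k} :=
        fun W => ⟨mkLine (hUne W), (mkLine_ax (hUne W)).1⟩
      let e₂ : {k : L // V ∈ k} → {W : P // W ∈ s} :=
        fun k => ⟨mkPoint (hne2 k), (mkPoint_ax (hne2 k)).2⟩
      have he₁ : IsProj P L (.range s) (.pencil U) e₁ :=
        IsProj.elemInv ⟨hUs, fun W => (mkLine_ax (hUne W)).2⟩
      have he₂ : IsProj P L (.pencil V) (.range s) e₂ :=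
        IsProj.elem ⟨hVs, fun k => (mkPoint_ax (hne2 k)).1⟩
      have hσ : IsProj P L (.range s) (.range s) (e₂ ∘ (π ∘ e₁)) :=
        IsProj.comp (IsProj.comp he₁ hπ) he₂
      -- points of the conic on s are fixed by σ
      have hfix : ∀ (W : P) (hW : W ∈ conicSet P L U V π) (hWs : W ∈ s),
          (e₂ ∘ (π ∘ e₁)) ⟨W, hWs⟩ = ⟨W, hWs⟩ := by
        intro W hW hWs
        obtain ⟨k, hWk, hWπk⟩ := hW
        have h1 : e₁ ⟨W, hWs⟩ = k := Subtype.ext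
          (line_unique (hUne ⟨W, hWs⟩) (mkLine_ax (hUne ⟨W, hWs⟩)).1
            (mkLine_ax (hUne ⟨W, hWs⟩)).2 k.2 hWk)
        show e₂ (π (e₁ ⟨W, hWs⟩)) = ⟨W, hWs⟩
        rw [h1]
        exact Subtype.ext (point_unique (hne2 (π k))
          (mkPoint_ax (hne2 (π k))).1 hWπk (mkPoint_ax (hne2 (π k))).2 hWs)
      have hid : ∀ w, (e₂ ∘ (π ∘ e₁)) w = w := by
        refine hT (.range s) _ hσ ⟨⟨X, hXs⟩, ⟨Y, hYs⟩, ⟨Z, hZs⟩, ?_, ?_, ?_,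
          hfix X hX hXs, hfix Y hY hYs, hfix Z hZ hZs⟩
        · exact fun e => hXY (congrArg Subtype.val e)
        · exact fun e => hXZ (congrArg Subtype.val e)
        · exact fun e => hYZ (congrArg Subtype.val e)
      -- apply at the intersection of UV with s
      have hUVs : mkLine hUV ≠ s := fun e => hUs (e ▸ (mkLine_ax hUV).1)
      set W₀ : P := mkPoint hUVs with hW₀
      have hW₀UV : W₀ ∈ mkLine hUV := (mkPoint_ax hUVs).1
      have hW₀s : W₀ ∈ s := (mkPoint_ax hUVs).2
      have h0 := hid ⟨W₀, hW₀s⟩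
      set kUV : {k : L // U ∈ k} := ⟨mkLine hUV, (mkLine_ax hUV).1⟩ with hkUV
      have h1 : e₁ ⟨W₀, hW₀s⟩ = kUV := Subtype.ext
        (line_unique (hUne ⟨W₀, hW₀s⟩) (mkLine_ax (hUne ⟨W₀, hW₀s⟩)).1
          (mkLine_ax (hUne ⟨W₀, hW₀s⟩)).2 (mkLine_ax hUV).1 hW₀UV)
      have h2 : e₂ (π kUV) = ⟨W₀, hW₀s⟩ := by
        rw [← h1]; exact h0
      have hW₀π : W₀ ∈ ((π kUV : L)) := by
        have h3 : (e₂ (π kUV) : P) = W₀ := congrArg Subtype.val h2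
        have h4 : (e₂ (π kUV) : P) ∈ ((π kUV : L)) := (mkPoint_ax (hne2 (π kUV))).1
        rwa [h3] at h4
      have hW₀V : V ≠ W₀ := fun e => hVs (e ▸ hW₀s)
      have : ((π kUV : L)) = mkLine hUV :=
        line_unique hW₀V (π kUV).2 hW₀π (mkLine_ax hUV).2 hW₀UV
      exact hnp kUV this

/-- A conic contains at least six points (when every line has at least six). -/
lemma conic_six_points {U V : P} {π : {k : L // U ∈ k} → {k : L // V ∈ k}}
    (hUV : U ≠ V) (hπ : IsProj P L (.pencil U) (.pencil V) π)
    (hnp : ∀ k : {k : L // U ∈ k}, ((π k : L)) ≠ (k : L))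
    (h6 : LinesHaveAtLeast P L 6) :
    ∃ t : Finset P, 6 ≤ t.card ∧ ∀ X ∈ t, X ∈ conicSet P L U V π := by
  classical
  obtain ⟨l, hUl⟩ := Nondegenerate.exists_line (P := P) (L := L) U
  obtain ⟨s, hcard, hs⟩ := h6 l
  have hne : ∀ {X : P}, X ∈ l → U ≠ X := fun {X} hX e => hUl (e ▸ hX)
  let k : ∀ {X : P}, X ∈ l → {k : L // U ∈ k} :=
    fun {X} hX => ⟨mkLine (hne hX), (mkLine_ax (hne hX)).1⟩
  let F : P → P := fun X =>
    if hX : X ∈ l then mkPoint (Ne.symm (hnp (k hX))) else X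
  have hF : ∀ {X : P} (hX : X ∈ l),
      F X ∈ ((k hX : L)) ∧ F X ∈ ((π (k hX) : L)) := by
    intro X hX
    simp only [F, dif_pos hX]
    exact mkPoint_ax (Ne.symm (hnp (k hX)))
  have hFκ : ∀ {X : P}, X ∈ l → F X ∈ conicSet P L U V π := by
    intro X hX
    exact ⟨k hX, (hF hX).1, (hF hX).2⟩
  have hinj : Set.InjOn F ↑s := by
    intro X hXs Y hYs hFXY
    by_contra hXY
    have hXl := hs X hXs
    have hYl := hs Y hYs
    have hkXY : ((k hXl : L)) ≠ ((k hYl : L)) := by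
      intro e
      have hXk : X ∈ ((k hXl : L)) := (mkLine_ax (hne hXl)).2
      have hYk : Y ∈ ((k hXl : L)) := e ▸ (mkLine_ax (hne hYl)).2
      have : (k hXl : L) = l := line_unique hXY hXk hYk hXl hYl
      exact hUl (this ▸ (k hXl).2)
    have hQY : F Y ∈ ((k hYl : L)) ∧ F Y ∈ ((π (k hYl) : L)) := hF hYl
    have hQX : F Y ∈ ((k hXl : L)) ∧ F Y ∈ ((π (k hXl) : L)) := by
      rw [← hFXY]; exact hF hXl
    have hUQ : U = F Y :=
      point_unique hkXY (k hXl).2 hQX.1 (k hYl).2 hQY.1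
    have hπeq : ((π (k hXl) : L)) = ((π (k hYl) : L)) :=
      line_unique hUV (hUQ ▸ hQX.2) (π (k hXl)).2 (hUQ ▸ hQY.2) (π (k hYl)).2
    have : k hXl = k hYl := hπ.inj (Subtype.ext hπeq)
    exact hkXY (congrArg Subtype.val this)
  refine ⟨s.image F, ?_, ?_⟩
  · rwa [Finset.card_image_of_injOn hinj]
  · intro X hX
    obtain ⟨Y, hYs, rfl⟩ := Finset.mem_image.mp hX
    exact hFκ (hs Y hYs)

end Aux

/-- **Existence of two secants through any point.** Let `κ` be a conic, and
assume Axiom P.  Then through any given point `Pt` of the plane there exist two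
distinct secants of `κ`. -/
theorem two_secants_through_point
    [Configuration.ProjectivePlane P L]
    (h6 : LinesHaveAtLeast P L 6) (hT : AxiomT P L) (hP : AxiomP P L)
    (κ : Set P) (hκ : IsConic P L κ)
    (Pt : P) :
    ∃ s₁ s₂ : L, s₁ ≠ s₂ ∧ Pt ∈ s₁ ∧ Pt ∈ s₂ ∧
      IsSecant P L κ s₁ ∧ IsSecant P L κ s₂ := by
  classical
  obtain ⟨U, V, π, hUV, hπ, hnp, rfl⟩ := hκ
  have hκ' : IsConic P L (conicSet P L U V π) := ⟨U, V, π, hUV, hπ, hnp, rfl⟩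
  obtain ⟨t, ht6, htκ⟩ := conic_six_points hUV hπ hnp h6
  have hle2 : ∀ {s : L} {X Y Z : P}, X ∈ conicSet P L U V π →
      Y ∈ conicSet P L U V π → Z ∈ conicSet P L U V π →
      X ∈ s → Y ∈ s → Z ∈ s → X ≠ Y → X ≠ Z → Y ≠ Z → False :=
    fun hX hY hZ hXs hYs hZs hXY hXZ hYZ =>
      conic_le_two hUV hπ hnp hT hX hY hZ hXs hYs hZs hXY hXZ hYZ
  -- helper: extract three pairwise distinct elements from a finset of card ≥ 3
  have three : ∀ (u : Finset P), 3 ≤ u.card →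
      ∃ a ∈ u, ∃ b ∈ u, ∃ c ∈ u, a ≠ b ∧ a ≠ c ∧ b ≠ c := by
    intro u hu
    obtain ⟨a, ha, b, hb, hab⟩ := Finset.one_lt_card.mp (show 1 < u.card by omega)
    have h1 : 1 ≤ ((u.erase a).erase b).card := by
      have e1 : u.card - 1 ≤ (u.erase a).card := Finset.pred_card_le_card_erase
      have e2 : (u.erase a).card - 1 ≤ ((u.erase a).erase b).card :=
        Finset.pred_card_le_card_erase
      omega
    obtain ⟨c, hc⟩ := Finset.card_pos.mp (show 0 < ((u.erase a).erase b).card by omega)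
    have hcb : c ≠ b := (Finset.mem_erase.mp hc).1
    have hca : c ≠ a := (Finset.mem_erase.mp (Finset.mem_erase.mp hc).2).1
    have hcu : c ∈ u := Finset.mem_of_mem_erase (Finset.mem_of_mem_erase hc)
    exact ⟨a, ha, b, hb, c, hcu, hab, hca.symm, hcb.symm⟩
  by_cases hPt : Pt ∈ conicSet P L U V π
  · -- Pt is on the conic
    have h2 : 2 ≤ (t.erase Pt).card := by
      have e1 : t.card - 1 ≤ (t.erase Pt).card := Finset.pred_card_le_card_erase
      omega
    obtain ⟨A, hA, B, hB, hAB⟩ := Finset.one_lt_card.mp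
      (show 1 < (t.erase Pt).card by omega)
    have hAPt : A ≠ Pt := (Finset.mem_erase.mp hA).1
    have hBPt : B ≠ Pt := (Finset.mem_erase.mp hB).1
    have hAκ : A ∈ conicSet P L U V π := htκ A (Finset.mem_of_mem_erase hA)
    have hBκ : B ∈ conicSet P L U V π := htκ B (Finset.mem_of_mem_erase hB)
    refine ⟨HasLines.mkLine hAPt.symm, HasLines.mkLine hBPt.symm, ?_,
      (HasLines.mkLine_ax hAPt.symm).1, (HasLines.mkLine_ax hBPt.symm).1,
      ⟨Pt, A, hAPt.symm, hPt, hAκ, (HasLines.mkLine_ax hAPt.symm).1,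
        (HasLines.mkLine_ax hAPt.symm).2⟩,
      ⟨Pt, B, hBPt.symm, hPt, hBκ, (HasLines.mkLine_ax hBPt.symm).1,
        (HasLines.mkLine_ax hBPt.symm).2⟩⟩
    intro e
    exact hle2 hPt hAκ hBκ (HasLines.mkLine_ax hAPt.symm).1
      (HasLines.mkLine_ax hAPt.symm).2 (e ▸ (HasLines.mkLine_ax hBPt.symm).2)
      hAPt.symm hBPt.symm hAB
  · -- Pt is off the conic
    set pred : P → Prop := fun X => ∀ s : L, Pt ∈ s → X ∈ s →
      IsSecant P L (conicSet P L U V π) s with hpred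
    have hT2 : (t.filter (fun X => ¬ pred X)).card ≤ 2 := by
      by_contra hc
      push_neg at hc
      obtain ⟨a, ha, b, hb, c, hc', hab, hac, hbc⟩ :=
        three (t.filter (fun X => ¬ pred X)) hc
      have tangent : ∀ x ∈ t.filter (fun X => ¬ pred X),
          ∃ s : L, Pt ∈ s ∧ IsTangent P L (conicSet P L U V π) s x := by
        intro x hx
        obtain ⟨hxt, hnpred⟩ := Finset.mem_filter.mp hx
        have hxκ : x ∈ conicSet P L U V π := htκ x hxt
        have hPtx : Pt ≠ x := fun e => hPt (e ▸ hxκ)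
        have hnsec : ¬ IsSecant P L (conicSet P L U V π) (HasLines.mkLine hPtx) := by
          intro hsec
          refine hnpred ?_
          intro s' hPts' hxs'
          have : s' = HasLines.mkLine hPtx := line_unique hPtx hPts' hxs'
            (HasLines.mkLine_ax hPtx).1 (HasLines.mkLine_ax hPtx).2
          rw [this]; exact hsec
        refine ⟨HasLines.mkLine hPtx, (HasLines.mkLine_ax hPtx).1, hxκ,
          (HasLines.mkLine_ax hPtx).2, ?_⟩
        intro Z hZκ hZs
        by_contra hZx
        exact hnsec ⟨Z, x, hZx, hZκ, hxκ, hZs, (HasLines.mkLine_ax hPtx).2⟩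
      obtain ⟨sa, hPsa, hta⟩ := tangent a ha
      obtain ⟨sb, hPsb, htb⟩ := tangent b hb
      obtain ⟨sc, hPsc, htc⟩ := tangent c hc'
      exact hP (conicSet P L U V π) hκ' a b c hta.1 htb.1 htc.1 hab hac hbc
        sa sb sc hta htb htc ⟨Pt, hPsa, hPsb, hPsc⟩
    have hsum := Finset.card_filter_add_card_filter_not
      (s := t) (p := pred)
    have h3 : 3 ≤ (t.filter pred).card := by omega
    obtain ⟨a, ha, b, hb, c, hc', hab, hac, hbc⟩ := three (t.filter pred) h3
    have haκ : a ∈ conicSet P L U V π := htκ a (Finset.mem_of_mem_filter a ha)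
    have hbκ : b ∈ conicSet P L U V π := htκ b (Finset.mem_of_mem_filter b hb)
    have hcκ : c ∈ conicSet P L U V π := htκ c (Finset.mem_of_mem_filter c hc')
    have haPt : Pt ≠ a := fun e => hPt (e ▸ haκ)
    have hbPt : Pt ≠ b := fun e => hPt (e ▸ hbκ)
    have hcPt : Pt ≠ c := fun e => hPt (e ▸ hcκ)
    have hsecA : IsSecant P L (conicSet P L U V π) (HasLines.mkLine haPt) :=
      (Finset.mem_filter.mp ha).2 _ (HasLines.mkLine_ax haPt).1
        (HasLines.mkLine_ax haPt).2
    have hsecB : IsSecant P L (conicSet P L U V π) (HasLines.mkLine hbPt) :=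
      (Finset.mem_filter.mp hb).2 _ (HasLines.mkLine_ax hbPt).1
        (HasLines.mkLine_ax hbPt).2
    have hsecC : IsSecant P L (conicSet P L U V π) (HasLines.mkLine hcPt) :=
      (Finset.mem_filter.mp hc').2 _ (HasLines.mkLine_ax hcPt).1
        (HasLines.mkLine_ax hcPt).2
    by_cases heq : (HasLines.mkLine haPt : L) = HasLines.mkLine hbPt
    · refine ⟨HasLines.mkLine haPt, HasLines.mkLine hcPt, ?_,
        (HasLines.mkLine_ax haPt).1, (HasLines.mkLine_ax hcPt).1, hsecA, hsecC⟩
      intro e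
      exact hle2 haκ hbκ hcκ (HasLines.mkLine_ax haPt).2
        (heq ▸ (HasLines.mkLine_ax hbPt).2) (e ▸ (HasLines.mkLine_ax hcPt).2)
        hab hac hbc
    · exact ⟨HasLines.mkLine haPt, HasLines.mkLine hbPt, heq,
        (HasLines.mkLine_ax haPt).1, (HasLines.mkLine_ax hbPt).1, hsecA, hsecB⟩
end

section
/- Quadrangle construction of the polar: Let κ be a conic, assume Axiom P and Fano's axiom, and let P be a point lying outside κ (P is distinct from every point of κ). Let E₁, E₂, E₃, E₄ be four distinct points of κ forming a quadrangle inscribed in κ with P as one of its diagonal points, say P = E₁E₂·E₃E₄. Then the polar of P with respect to κ is the line joining the other two diagonal points E₁E₃·E₂E₄ and E₁E₄·E₂E₃. -/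
open Configuration

universe u
variable (P L : Type u) [Membership P L]

/-- `IsTriangle A B C ab bc ca` : the points `A B C` form a triangle with sides
`ab = AB`, `bc = BC`, `ca = CA`; noncollinearity is expressed by each vertex
lying outside the opposite side. -/
def IsTriangle (A B C : P) (ab bc ca : L) : Prop :=
  A ∈ ab ∧ B ∈ ab ∧ B ∈ bc ∧ C ∈ bc ∧ C ∈ ca ∧ A ∈ ca ∧ A ∉ bc ∧ B ∉ ca ∧ C ∉ ab

/-- Two triangles are distinct if corresponding vertices are distinct and
corresponding sides are distinct. -/
def DistinctTriangles (A B C A' B' C' : P) (ab bc ca ab' bc' ca' : L) : Prop :=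
  A ≠ A' ∧ B ≠ B' ∧ C ≠ C' ∧ ab ≠ ab' ∧ bc ≠ bc' ∧ ca ≠ ca'

/-- Two triangles are perspective from the center `O` : the lines joining
corresponding vertices are concurrent at `O`, and `O` lies outside each of the
six sides. -/
def PerspectiveFromCenter (A B C A' B' C' : P) (ab bc ca ab' bc' ca' : L) (O : P) : Prop :=
  (∃ la : L, A ∈ la ∧ A' ∈ la ∧ O ∈ la) ∧
  (∃ lb : L, B ∈ lb ∧ B' ∈ lb ∧ O ∈ lb) ∧
  (∃ lc : L, C ∈ lc ∧ C' ∈ lc ∧ O ∈ lc) ∧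
  O ∉ ab ∧ O ∉ bc ∧ O ∉ ca ∧ O ∉ ab' ∧ O ∉ bc' ∧ O ∉ ca'

/-- Two triangles are perspective from the axis `l` : the intersection points of
corresponding sides lie on `l`, and `l` avoids each of the six vertices. -/
def PerspectiveFromAxis (A B C A' B' C' : P) (ab bc ca ab' bc' ca' : L) (l : L) : Prop :=
  (∃ X : P, X ∈ ab ∧ X ∈ ab' ∧ X ∈ l) ∧
  (∃ Y : P, Y ∈ bc ∧ Y ∈ bc' ∧ Y ∈ l) ∧
  (∃ Z : P, Z ∈ ca ∧ Z ∈ ca' ∧ Z ∈ l) ∧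
  A ∉ l ∧ B ∉ l ∧ C ∉ l ∧ A' ∉ l ∧ B' ∉ l ∧ C' ∉ l

/-- Desargues's property: two distinct triangles that are perspective from a
center are perspective from an axis. -/
def DesarguesProperty : Prop :=
  ∀ (A B C A' B' C' : P) (ab bc ca ab' bc' ca' : L) (O : P),
    IsTriangle P L A B C ab bc ca → IsTriangle P L A' B' C' ab' bc' ca' →
    DistinctTriangles P L A B C A' B' C' ab bc ca ab' bc' ca' →
    PerspectiveFromCenter P L A B C A' B' C' ab bc ca ab' bc' ca' O →
    ∃ l : L, PerspectiveFromAxis P L A B C A' B' C' ab bc ca ab' bc' ca' l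

/-- `D` is the harmonic conjugate `h(A,B;C)` of `C` with respect to the distinct
points `A`, `B` : choosing a line `l` through `C` with `l ≠ AB` and a point `R`
outside both `AB` and `l`, and setting `Pp = BR·l`, `Q = AR·l`, `S = AP·BQ`,
the point `D` is `AB·RS`.  (By the invariance theorem this is independent of
the choices of `l` and `R`.) -/
def IsHarmonic (A B C D : P) : Prop :=
  A ≠ B ∧ ∃ (ab l : L) (R Pp Q S : P),
    A ∈ ab ∧ B ∈ ab ∧ C ∈ ab ∧ C ∈ l ∧ l ≠ ab ∧ R ∉ ab ∧ R ∉ l ∧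
    Pp ∈ l ∧ Col P L B R Pp ∧ Q ∈ l ∧ Col P L A R Q ∧
    Col P L A Pp S ∧ Col P L B Q S ∧ D ∈ ab ∧ Col P L R S D

/-- Fano's axiom: the three diagonal points of any quadrangle (four points, no
three collinear) are noncollinear. -/
def FanoAxiom : Prop :=
  ∀ E₁ E₂ E₃ E₄ X Y Z : P,
    ¬ Col P L E₁ E₂ E₃ → ¬ Col P L E₁ E₂ E₄ → ¬ Col P L E₁ E₃ E₄ → ¬ Col P L E₂ E₃ E₄ →
    Col P L E₁ E₂ X → Col P L E₃ E₄ X →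
    Col P L E₁ E₃ Y → Col P L E₂ E₄ Y →
    Col P L E₁ E₄ Z → Col P L E₂ E₃ Z →
    ¬ Col P L X Y Z

/-- The polar of a point `Pt` with respect to a conic `κ` : the line `QQ'`
obtained from a secant `q` of `κ` through `Pt`, where `q` meets `κ` at the
distinct points `Q₁, Q₂`, with tangents `q₁, q₂`, `Q = q₁·q₂`, and
`Q' = h(Q₁,Q₂;Pt)`.  (This is independent of the choice of the secant `q`.) -/
def IsPolar (κ : Set P) (Pt : P) (p : L) : Prop :=
  ∃ (q q₁ q₂ : L) (Q₁ Q₂ Q Q' : P),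
    Pt ∈ q ∧ Q₁ ≠ Q₂ ∧ Q₁ ∈ κ ∧ Q₂ ∈ κ ∧ Q₁ ∈ q ∧ Q₂ ∈ q ∧
    IsTangent P L κ q₁ Q₁ ∧ IsTangent P L κ q₂ Q₂ ∧
    Q ∈ q₁ ∧ Q ∈ q₂ ∧ IsHarmonic P L Q₁ Q₂ Pt Q' ∧
    Q ≠ Q' ∧ Q ∈ p ∧ Q' ∈ p

set_option linter.unusedSectionVars false
section Basics

namespace PQAux

open Configuration Configuration.Nondegenerate Configuration.HasLines Configuration.HasPoints

variable {P L : Type u} [Membership P L] [Configuration.ProjectivePlane P L]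

lemma line_eq {A B : P} {l m : L} (hAB : A ≠ B) (h1 : A ∈ l) (h2 : B ∈ l)
    (h3 : A ∈ m) (h4 : B ∈ m) : l = m :=
  (eq_or_eq h1 h2 h3 h4).resolve_left hAB

lemma pt_eq {A B : P} {l m : L} (hlm : l ≠ m) (h1 : A ∈ l) (h2 : A ∈ m)
    (h3 : B ∈ l) (h4 : B ∈ m) : A = B :=
  (eq_or_eq h1 h3 h2 h4).resolve_right hlm

lemma jn_left {A B : P} (h : A ≠ B) : A ∈ (mkLine h : L) := (mkLine_ax h).1
lemma jn_right {A B : P} (h : A ≠ B) : B ∈ (mkLine h : L) := (mkLine_ax h).2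

lemma jn_eq {A B : P} (h : A ≠ B) {l : L} (hA : A ∈ l) (hB : B ∈ l) :
    (mkLine h : L) = l := line_eq h (jn_left h) (jn_right h) hA hB

lemma mt_left {l m : L} (h : l ≠ m) : (mkPoint h : P) ∈ l := (mkPoint_ax h).1
lemma mt_right {l m : L} (h : l ≠ m) : (mkPoint h : P) ∈ m := (mkPoint_ax h).2

lemma mt_eq {l m : L} (h : l ≠ m) {X : P} (hX : X ∈ l) (hX' : X ∈ m) :
    (mkPoint h : P) = X := pt_eq h (mt_left h) (mt_right h) hX hX'

lemma col_in {A B C : P} {l : L} (h : Col P L A B C) (hAB : A ≠ B)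
    (hA : A ∈ l) (hB : B ∈ l) : C ∈ l := by
  obtain ⟨m, h1, h2, h3⟩ := h
  rwa [line_eq hAB h1 h2 hA hB] at h3

lemma col_of {A B C : P} {l : L} (hA : A ∈ l) (hB : B ∈ l) (hC : C ∈ l) :
    Col P L A B C := ⟨l, hA, hB, hC⟩

lemma pick (h8 : LinesHaveAtLeast P L 8) (l : L) (bad : Finset P) (hb : bad.card < 8) :
    ∃ X : P, X ∈ l ∧ X ∉ bad := by
  classical
  obtain ⟨s, hcard, hs⟩ := h8 l
  have h1 : s.card - bad.card ≤ (s \ bad).card := Finset.le_card_sdiff bad s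
  have h : (s \ bad).Nonempty := Finset.card_pos.mp (by omega)
  obtain ⟨X, hX⟩ := h
  exact ⟨X, hs X (Finset.mem_sdiff.mp hX).1, (Finset.mem_sdiff.mp hX).2⟩

lemma exists_third (h8 : LinesHaveAtLeast P L 8) (l : L) (A B : P) :
    ∃ C : P, C ∈ l ∧ C ≠ A ∧ C ≠ B := by
  classical
  obtain ⟨X, hXl, hX⟩ := pick h8 l {A, B} (lt_of_le_of_lt (Finset.card_insert_le A {B})
    (by simp))
  refine ⟨X, hXl, ?_, ?_⟩ <;> intro h <;> subst h <;> simp at hX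

end PQAux

end Basics
namespace PQAux
variable {P L : Type u} [Membership P L] [Configuration.ProjectivePlane P L]

lemma col_in2 {A B C : P} {l : L} (h : Col P L A B C) (hAC : A ≠ C)
    (hA : A ∈ l) (hC : C ∈ l) : B ∈ l := by
  obtain ⟨m, h1, h2, h3⟩ := h
  rwa [line_eq hAC h1 h3 hA hC] at h2

lemma col_mem_line {A B C : P} {t : L} (h : Col P L A B C) (hBC : B ≠ C)
    (hB : B ∈ t) (hC : C ∈ t) : A ∈ t := by
  obtain ⟨w, h1, h2, h3⟩ := h
  rwa [line_eq hBC h2 h3 hB hC] at h1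

lemma card2 {α : Type u} [DecidableEq α] (a b : α) : ({a, b} : Finset α).card < 8 := by
  have h1 := Finset.card_insert_le a ({b} : Finset α)
  have h2 : ({b} : Finset α).card = 1 := Finset.card_singleton b
  show (insert a ({b} : Finset α)).card < 8
  omega

end PQAux
namespace PQAux
variable {P L : Type u} [Membership P L] [Configuration.ProjectivePlane P L]

lemma meml {X : P} {l l' : L} (h : l = l') (hX : X ∈ l) : X ∈ l' := h ▸ hX
lemma memp {X Y : P} {l : L} (h : X = Y) (hX : X ∈ l) : Y ∈ l := h ▸ hX

end PQAux
set_option linter.unusedSectionVars false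

namespace PQAux

open Configuration Configuration.Nondegenerate Configuration.HasLines Configuration.HasPoints

variable {P L : Type u} [Membership P L] [Configuration.ProjectivePlane P L]

lemma proj_inj {a b : Obj P L} {f : a.Carrier → b.Carrier}
    (h : IsProj P L a b f) : Function.Injective f := by
  induction h with
  | @persp l m f h =>
    obtain ⟨O, hOl, hOm, hf⟩ := h
    intro X Y hXY
    obtain ⟨k, hOk, hXk, hfXk⟩ := hf X
    obtain ⟨k', hOk', hYk', hfYk'⟩ := hf Y
    have hOfX : O ≠ ((f X : P)) := fun h => hOm (h ▸ (f X).2)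
    have hkk' : k = k' := line_eq hOfX hOk hfXk hOk' (hXY ▸ hfYk')
    have hkl : k ≠ l := fun h => hOl (h ▸ hOk)
    exact Subtype.ext (pt_eq hkl hXk X.2 (hkk' ▸ hYk') Y.2)
  | @elem U l f h =>
    obtain ⟨hUl, hf⟩ := h
    intro k k' hkk'
    have h1 : ((f k : P)) ∈ (k' : L) := hkk' ▸ hf k'
    have hUfk : U ≠ ((f k : P)) := fun h => hUl (h ▸ (f k).2)
    exact Subtype.ext (line_eq hUfk k.2 (hf k) k'.2 h1)
  | @elemInv U l f h =>
    obtain ⟨hUl, hf⟩ := h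
    intro X X' hXX'
    have h1 : (X' : P) ∈ ((f X : L)) := hXX' ▸ hf X'
    have hfXl : ((f X : L)) ≠ l := fun h => hUl (h ▸ (f X).2)
    exact Subtype.ext (pt_eq hfXl (hf X) X.2 h1 X'.2)
  | comp h1 h2 ih1 ih2 => exact Function.Injective.comp ih2 ih1

lemma proj_inv {a b : Obj P L} {f : a.Carrier → b.Carrier}
    (h : IsProj P L a b f) :
    ∃ g : b.Carrier → a.Carrier, IsProj P L b a g ∧
      (∀ x, g (f x) = x) ∧ (∀ y, f (g y) = y) := by
  induction h with
  | @persp l m f h =>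
    obtain ⟨O, hOl, hOm, hf⟩ := h
    have hOY : ∀ Y : {Y : P // Y ∈ m}, O ≠ (Y : P) := fun Y h => hOm (h ▸ Y.2)
    have hkp : ∀ Y : {Y : P // Y ∈ m}, (mkLine (hOY Y) : L) ≠ l :=
      fun Y h => hOl (h ▸ jn_left (hOY Y))
    refine ⟨fun Y => ⟨mkPoint (hkp Y), mt_right (hkp Y)⟩, .persp ⟨O, hOm, hOl, fun Y =>
      ⟨mkLine (hOY Y), jn_left (hOY Y), jn_right (hOY Y), mt_left (hkp Y)⟩⟩, ?_, ?_⟩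
    · intro X
      obtain ⟨k, hOk, hXk, hfXk⟩ := hf X
      have hOfX : O ≠ ((f X : P)) := hOY (f X)
      have hk : (mkLine hOfX : L) = k := line_eq hOfX (jn_left hOfX) (jn_right hOfX) hOk hfXk
      have hkl : k ≠ l := fun h => hOl (h ▸ hOk)
      exact Subtype.ext (pt_eq hkl (hk ▸ mt_left (hkp (f X))) (mt_right (hkp (f X))) hXk X.2)
    · intro Y
      set gY : {X : P // X ∈ l} := ⟨mkPoint (hkp Y), mt_right (hkp Y)⟩ with hgY
      obtain ⟨k, hOk, hXk, hfXk⟩ := hf gY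
      have hOgY : O ≠ (gY : P) := fun h => hOl (h ▸ gY.2)
      have hk : k = (mkLine (hOY Y) : L) :=
        line_eq hOgY hOk hXk (jn_left (hOY Y)) (mt_left (hkp Y))
      have hkm : (mkLine (hOY Y) : L) ≠ m := fun h => hOm (h ▸ jn_left (hOY Y))
      exact Subtype.ext (pt_eq hkm (hk ▸ hfXk) (f gY).2 (jn_right (hOY Y)) Y.2)
  | @elem U l f h =>
    obtain ⟨hUl, hf⟩ := h
    have hUX : ∀ X : {X : P // X ∈ l}, U ≠ (X : P) := fun X h => hUl (h ▸ X.2)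
    refine ⟨fun X => ⟨mkLine (hUX X), jn_left (hUX X)⟩,
      .elemInv ⟨hUl, fun X => jn_right (hUX X)⟩, ?_, ?_⟩
    · intro k
      exact Subtype.ext (line_eq (hUX (f k)) (jn_left (hUX (f k))) (jn_right (hUX (f k)))
        k.2 (hf k))
    · intro X
      set gX : {k : L // U ∈ k} := ⟨mkLine (hUX X), jn_left (hUX X)⟩
      have h1 : ((gX : L)) ≠ l := fun h => hUl (h ▸ gX.2)
      exact Subtype.ext (pt_eq h1 (hf gX) (f gX).2 (jn_right (hUX X)) X.2)
  | @elemInv U l f h =>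
    obtain ⟨hUl, hf⟩ := h
    have hkl : ∀ k : {k : L // U ∈ k}, (k : L) ≠ l := fun k h => hUl (h ▸ k.2)
    refine ⟨fun k => ⟨mkPoint (hkl k), mt_right (hkl k)⟩,
      .elem ⟨hUl, fun k => mt_left (hkl k)⟩, ?_, ?_⟩
    · intro X
      exact Subtype.ext (pt_eq (hkl (f X)) (mt_left (hkl (f X))) (mt_right (hkl (f X)))
        (hf X) X.2)
    · intro k
      set gk : {X : P // X ∈ l} := ⟨mkPoint (hkl k), mt_right (hkl k)⟩
      have hUgk : U ≠ (gk : P) := fun h => hUl (h ▸ gk.2)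
      exact Subtype.ext (line_eq hUgk (f gk).2 (hf gk) k.2 (mt_left (hkl k)))
  | @comp a b c f g h1 h2 ih1 ih2 =>
    obtain ⟨g1, hg1, hg1l, hg1r⟩ := ih1
    obtain ⟨g2, hg2, hg2l, hg2r⟩ := ih2
    refine ⟨g1 ∘ g2, .comp hg2 hg1, fun x => ?_, fun y => ?_⟩
    · simp only [Function.comp_apply, hg2l, hg1l]
    · simp only [Function.comp_apply, hg1r, hg2r]

end PQAux
namespace PQAux

open Configuration Configuration.Nondegenerate Configuration.HasLines Configuration.HasPoints

variable {P L : Type u} [Membership P L] [Configuration.ProjectivePlane P L]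

/-- A projectivity between distinct ranges fixing the common point is a perspectivity. -/
lemma lemmaA (hT : AxiomT P L) (h8 : LinesHaveAtLeast P L 8)
    {p q : L} (hpq : p ≠ q) {f : {X : P // X ∈ p} → {Y : P // Y ∈ q}}
    (hf : IsProj P L (.range p) (.range q) f)
    {Pc : P} (hPp : Pc ∈ p) (hPq : Pc ∈ q)
    (hfix : ((f ⟨Pc, hPp⟩ : P)) = Pc) :
    ∃ O : P, O ∉ p ∧ O ∉ q ∧ ∀ X : {X : P // X ∈ p}, Col P L O X (f X) := by
  classical
  have hinj : Function.Injective f := proj_inj hf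
  have fnotp : ∀ X : {X : P // X ∈ p}, (X : P) ≠ Pc → ((f X : P)) ∉ p := by
    intro X hX h
    have h1 : ((f X : P)) = Pc := pt_eq hpq h (f X).2 hPp hPq
    have h2 : f X = f ⟨Pc, hPp⟩ := Subtype.ext (h1.trans hfix.symm)
    exact hX (congrArg Subtype.val (hinj h2))
  have fne : ∀ X : {X : P // X ∈ p}, (X : P) ≠ Pc → (X : P) ≠ ((f X : P)) :=
    fun X hX h => fnotp X hX (h ▸ X.2)
  obtain ⟨X, hXp, hXb⟩ := pick h8 p {Pc} (by simp)
  have hX1 : X ≠ Pc := by simpa using hXb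
  obtain ⟨Y, hYp, hYb⟩ := pick h8 p {Pc, X} (lt_of_le_of_lt (Finset.card_insert_le _ _) (by simp))
  have hY1 : Y ≠ Pc := by intro h; subst h; simp at hYb
  have hYX : Y ≠ X := by intro h; subst h; simp at hYb
  set Xs : {X : P // X ∈ p} := ⟨X, hXp⟩ with hXs
  set Ys : {X : P // X ∈ p} := ⟨Y, hYp⟩ with hYs
  set lX : L := mkLine (fne Xs hX1) with hlX
  set lY : L := mkLine (fne Ys hY1) with hlY
  have hXlX : X ∈ lX := jn_left _
  have hfXlX : ((f Xs : P)) ∈ lX := jn_right _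
  have hYlY : Y ∈ lY := jn_left _
  have hfYlY : ((f Ys : P)) ∈ lY := jn_right _
  have hlXp : lX ≠ p := fun h => fnotp Xs hX1 (h ▸ hfXlX)
  have hlYp : lY ≠ p := fun h => fnotp Ys hY1 (h ▸ hfYlY)
  have hlXq : lX ≠ q := by
    intro h
    have : X = Pc := pt_eq hpq hXp (h ▸ hXlX) hPp hPq
    exact hX1 this
  have hlYq : lY ≠ q := by
    intro h
    have : Y = Pc := pt_eq hpq hYp (h ▸ hYlY) hPp hPq
    exact hY1 this
  have hlXlY : lX ≠ lY := by
    intro h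
    exact hlXp (line_eq hYX (h ▸ hYlY) hXlX hYp hXp)
  set O : P := mkPoint hlXlY with hO
  have hOlX : O ∈ lX := mt_left _
  have hOlY : O ∈ lY := mt_right _
  have hOp : O ∉ p := by
    intro h
    have h1 : O = X := pt_eq hlXp hOlX h hXlX hXp
    have h2 : O = Y := pt_eq hlYp hOlY h hYlY hYp
    exact hYX (h2 ▸ h1)
  have hOq : O ∉ q := by
    intro h
    have h1 : O = ((f Xs : P)) := pt_eq hlXq hOlX h hfXlX (f Xs).2
    have h2 : O = ((f Ys : P)) := pt_eq hlYq hOlY h hfYlY (f Ys).2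
    exact hYX (congrArg Subtype.val (hinj (Subtype.ext (h1.symm.trans h2))).symm)
  have hOZ : ∀ Z : {Y : P // Y ∈ q}, O ≠ (Z : P) := fun Z h => hOq (h ▸ Z.2)
  have hkZp : ∀ Z : {Y : P // Y ∈ q}, (mkLine (hOZ Z) : L) ≠ p :=
    fun Z h => hOp (h ▸ jn_left (hOZ Z))
  set gq : {Y : P // Y ∈ q} → {X : P // X ∈ p} :=
    fun Z => ⟨mkPoint (hkZp Z), mt_right (hkZp Z)⟩ with hgq
  have hgqp : IsRangePersp P L q p gq :=
    ⟨O, hOq, hOp, fun Z => ⟨mkLine (hOZ Z), jn_left _, jn_right _, mt_left _⟩⟩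
  have hχ : IsProj P L (.range p) (.range p) (gq ∘ f) := .comp hf (.persp hgqp)
  have hfixX : gq (f Xs) = Xs := by
    have h1 : (mkLine (hOZ (f Xs)) : L) = lX :=
      line_eq (hOZ (f Xs)) (jn_left _) (jn_right _) hOlX hfXlX
    have h2 : X ∈ (mkLine (hOZ (f Xs)) : L) := by rw [h1]; exact hXlX
    exact Subtype.ext (pt_eq (hkZp (f Xs)) (mt_left _) (mt_right _) h2 hXp)
  have hfixY : gq (f Ys) = Ys := by
    have h1 : (mkLine (hOZ (f Ys)) : L) = lY :=
      line_eq (hOZ (f Ys)) (jn_left _) (jn_right _) hOlY hfYlY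
    have h2 : Y ∈ (mkLine (hOZ (f Ys)) : L) := by rw [h1]; exact hYlY
    exact Subtype.ext (pt_eq (hkZp (f Ys)) (mt_left _) (mt_right _) h2 hYp)
  have hfixP : gq (f ⟨Pc, hPp⟩) = ⟨Pc, hPp⟩ := by
    have h1 : f ⟨Pc, hPp⟩ = ⟨Pc, hPq⟩ := Subtype.ext hfix
    rw [h1]
    exact Subtype.ext (mt_eq (hkZp ⟨Pc, hPq⟩) (jn_right _) hPp)
  have hid : ∀ w, (gq ∘ f) w = w := by
    refine hT (.range p) (gq ∘ f) hχ ⟨Xs, Ys, ⟨Pc, hPp⟩, ?_, ?_, ?_, hfixX, hfixY, hfixP⟩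
    · intro h; exact hYX (congrArg Subtype.val h).symm
    · intro h; exact hX1 (congrArg Subtype.val h)
    · intro h; exact hY1 (congrArg Subtype.val h)
  refine ⟨O, hOp, hOq, fun W => ?_⟩
  have h1 : gq (f W) = W := hid W
  have h2 : (W : P) ∈ (mkLine (hOZ (f W)) : L) := by
    have h3 := mt_left (hkZp (f W))
    rw [show (mkPoint (hkZp (f W)) : P) = (W : P) from congrArg Subtype.val h1] at h3
    exact h3
  exact ⟨mkLine (hOZ (f W)), jn_left _, h2, jn_right _⟩

end PQAux
namespace PQAux

open Configuration Configuration.Nondegenerate Configuration.HasLines Configuration.HasPoints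

variable {P L : Type u} [Membership P L] [Configuration.ProjectivePlane P L]

/-- Nondegeneracy facts about a harmonic quadrangle construction. -/
lemma quadFacts {n l : L} {U V R Pp Q S : P} {vr ur up vq : L}
    (hUV : U ≠ V) (hUn : U ∈ n) (hVn : V ∈ n) (hUl : U ∉ l) (hVl : V ∉ l)
    (hRn : R ∉ n) (hRl : R ∉ l)
    (hvrV : V ∈ vr) (hvrR : R ∈ vr) (hPl : Pp ∈ l) (hPvr : Pp ∈ vr)
    (hurU : U ∈ ur) (hurR : R ∈ ur) (hQl : Q ∈ l) (hQur : Q ∈ ur)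
    (hupU : U ∈ up) (hupP : Pp ∈ up) (hSup : S ∈ up)
    (hvqV : V ∈ vq) (hvqQ : Q ∈ vq) (hSvq : S ∈ vq) :
    vr ≠ l ∧ ur ≠ l ∧ vr ≠ n ∧ ur ≠ n ∧ Pp ∉ n ∧ Q ∉ n ∧ Pp ≠ Q ∧
    vr ≠ ur ∧ up ≠ vq ∧ up ≠ l ∧ vq ≠ l ∧ up ≠ n ∧ vq ≠ n ∧
    S ≠ U ∧ S ≠ V ∧ S ∉ n ∧ S ∉ l ∧ S ≠ R ∧ R ∉ up ∧ vr ≠ vq ∧ S ∉ vr ∧ Q ∉ vr ∧ Q ∉ up := by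
  have hvrl : vr ≠ l := fun h => hRl (h ▸ hvrR)
  have hurl : ur ≠ l := fun h => hRl (h ▸ hurR)
  have hvrn : vr ≠ n := fun h => hRn (h ▸ hvrR)
  have hurn : ur ≠ n := fun h => hRn (h ▸ hurR)
  have hPn : Pp ∉ n := by
    intro h
    have h1 : Pp = V := pt_eq hvrn hPvr h hvrV hVn
    exact hVl (h1 ▸ hPl)
  have hQn : Q ∉ n := by
    intro h
    have h1 : Q = U := pt_eq hurn hQur h hurU hUn
    exact hUl (h1 ▸ hQl)
  have hvrur : vr ≠ ur := by
    intro h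
    exact hRn ((line_eq hUV hurU (h ▸ hvrV) hUn hVn) ▸ hurR)
  have hPQ : Pp ≠ Q := by
    intro h
    have h1 : Pp = R := pt_eq hvrur hPvr (h ▸ hQur) hvrR hurR
    exact hRl (h1 ▸ hPl)
  have hupvq : up ≠ vq := by
    intro h
    exact hPn ((line_eq hUV hupU (h ▸ hvqV) hUn hVn) ▸ hupP)
  have hupl : up ≠ l := fun h => hUl (h ▸ hupU)
  have hvql : vq ≠ l := fun h => hVl (h ▸ hvqV)
  have hupn : up ≠ n := fun h => hPn (h ▸ hupP)
  have hvqn : vq ≠ n := fun h => hQn (h ▸ hvqQ)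
  have hSU : S ≠ U := by
    intro h
    exact hQn ((line_eq hUV (h ▸ hSvq) hvqV hUn hVn) ▸ hvqQ)
  have hSV : S ≠ V := by
    intro h
    exact hPn ((line_eq hUV hupU (h ▸ hSup) hUn hVn) ▸ hupP)
  have hSn : S ∉ n := by
    intro h
    exact hSU (pt_eq hupn hSup h hupU hUn)
  have hSl : S ∉ l := by
    intro h
    have h1 : S = Pp := pt_eq hupl hSup h hupP hPl
    have h2 : S = Q := pt_eq hvql hSvq h hvqQ hQl
    exact hPQ (h1 ▸ h2 ▸ rfl)
  have hRup : R ∉ up := by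
    intro h
    have hRU : R ≠ U := fun he => hRn (he ▸ hUn)
    have h1 : up = ur := line_eq hRU.symm hupU h hurU hurR
    have h2 : Pp = R := pt_eq hvrur hPvr (h1 ▸ hupP) hvrR hurR
    exact hRl (h2 ▸ hPl)
  have hSR : S ≠ R := fun h => hRup (h ▸ hSup)
  have hvrvq : vr ≠ vq := by
    intro h
    have h1 : Q = Pp := pt_eq hvrl (h ▸ hvqQ) hQl hPvr hPl
    exact hPQ h1.symm
  have hSvr : S ∉ vr := by
    intro h
    exact hSV (pt_eq hvrvq h hSvq hvrV hvqV)
  have hQvr : Q ∉ vr := by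
    intro h
    exact hPQ (pt_eq hvrl hPvr hPl h hQl)
  have hQup : Q ∉ up := by
    intro h
    exact hPQ (pt_eq hupl hupP hPl h hQl)
  exact ⟨hvrl, hurl, hvrn, hurn, hPn, hQn, hPQ, hvrur, hupvq, hupl, hvql, hupn, hvqn,
    hSU, hSV, hSn, hSl, hSR, hRup, hvrvq, hSvr, hQvr, hQup⟩

end PQAux
namespace PQAux

open Configuration Configuration.Nondegenerate Configuration.HasLines Configuration.HasPoints

variable {P L : Type u} [Membership P L] [Configuration.ProjectivePlane P L]

/-- Moving the auxiliary point of the harmonic quadrangle construction along a line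
through `U` does not change the output (one application of Desargues). -/
lemma stepU (hdes : DesarguesProperty P L)
    {n l : L} {U V R₁ P₁ Q₁ S₁ D₁ R₂ P₂ Q₂ S₂ D₂ : P}
    (hUV : U ≠ V) (hUn : U ∈ n) (hVn : V ∈ n) (hUl : U ∉ l) (hVl : V ∉ l)
    (hR₁n : R₁ ∉ n) (hR₁l : R₁ ∉ l)
    (hP₁l : P₁ ∈ l) (hP₁c : Col P L V R₁ P₁) (hQ₁l : Q₁ ∈ l) (hQ₁c : Col P L U R₁ Q₁)
    (hS₁P : Col P L U P₁ S₁) (hS₁Q : Col P L V Q₁ S₁)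
    (hD₁n : D₁ ∈ n) (hD₁c : Col P L R₁ S₁ D₁)
    (hR₂n : R₂ ∉ n) (hR₂l : R₂ ∉ l)
    (hP₂l : P₂ ∈ l) (hP₂c : Col P L V R₂ P₂) (hQ₂l : Q₂ ∈ l) (hQ₂c : Col P L U R₂ Q₂)
    (hS₂P : Col P L U P₂ S₂) (hS₂Q : Col P L V Q₂ S₂)
    (hD₂n : D₂ ∈ n) (hD₂c : Col P L R₂ S₂ D₂)
    (hR12 : R₁ ≠ R₂) (hcol : Col P L U R₁ R₂) : D₁ = D₂ := by
  have hUR₁ : U ≠ R₁ := by rintro rfl; exact hR₁n hUn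
  have hVR₁ : V ≠ R₁ := by rintro rfl; exact hR₁n hVn
  have hUR₂ : U ≠ R₂ := by rintro rfl; exact hR₂n hUn
  have hVR₂ : V ≠ R₂ := by rintro rfl; exact hR₂n hVn
  have hUP₁ : U ≠ P₁ := by rintro rfl; exact hUl hP₁l
  have hUP₂ : U ≠ P₂ := by rintro rfl; exact hUl hP₂l
  have hVQ₁ : V ≠ Q₁ := by rintro rfl; exact hVl hQ₁l
  set ur₁ : L := mkLine hUR₁ with hur₁def
  set vr₁ : L := mkLine hVR₁ with hvr₁def
  set vr₂ : L := mkLine hVR₂ with hvr₂def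
  set up₁ : L := mkLine hUP₁ with hup₁def
  set up₂ : L := mkLine hUP₂ with hup₂def
  set vq₁ : L := mkLine hVQ₁ with hvq₁def
  have hur₁U : U ∈ ur₁ := jn_left _
  have hur₁R : R₁ ∈ ur₁ := jn_right _
  have hur₁R₂ : R₂ ∈ ur₁ := col_in hcol hUR₁ hur₁U hur₁R
  have hQ₁ur : Q₁ ∈ ur₁ := col_in hQ₁c hUR₁ hur₁U hur₁R
  have hur₂ : (mkLine hUR₂ : L) = ur₁ :=
    line_eq hUR₂ (jn_left _) (jn_right _) hur₁U hur₁R₂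
  have hQ₂ur : Q₂ ∈ ur₁ := hur₂ ▸ col_in hQ₂c hUR₂ (jn_left _) (jn_right _)
  have hur₁l : ur₁ ≠ l := fun h => hR₁l (h ▸ hur₁R)
  have hQ21 : Q₂ = Q₁ := pt_eq hur₁l hQ₂ur hQ₂l hQ₁ur hQ₁l
  subst hQ21
  have hvr₁V : V ∈ vr₁ := jn_left _
  have hvr₁R : R₁ ∈ vr₁ := jn_right _
  have hP₁vr : P₁ ∈ vr₁ := col_in hP₁c hVR₁ hvr₁V hvr₁R
  have hvr₂V : V ∈ vr₂ := jn_left _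
  have hvr₂R : R₂ ∈ vr₂ := jn_right _
  have hP₂vr : P₂ ∈ vr₂ := col_in hP₂c hVR₂ hvr₂V hvr₂R
  have hup₁U : U ∈ up₁ := jn_left _
  have hup₁P : P₁ ∈ up₁ := jn_right _
  have hS₁up : S₁ ∈ up₁ := col_in hS₁P hUP₁ hup₁U hup₁P
  have hup₂U : U ∈ up₂ := jn_left _
  have hup₂P : P₂ ∈ up₂ := jn_right _
  have hS₂up : S₂ ∈ up₂ := col_in hS₂P hUP₂ hup₂U hup₂P
  have hvq₁V : V ∈ vq₁ := jn_left _
  have hvq₁Q : Q₂ ∈ vq₁ := jn_right _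
  have hS₁vq : S₁ ∈ vq₁ := col_in hS₁Q hVQ₁ hvq₁V hvq₁Q
  have hS₂vq : S₂ ∈ vq₁ := col_in hS₂Q hVQ₁ hvq₁V hvq₁Q
  obtain ⟨hvr₁l, _, hvr₁n, hur₁n, hP₁n, hQ₁n, hP₁Q, hvr₁ur, hup₁vq, hup₁l, hvq₁l,
    hup₁n, hvq₁n, hS₁U, hS₁V, hS₁n, hS₁l, hS₁R, hR₁up, hvr₁vq, hS₁vr, hQvr₁, hQup₁⟩ :=
    quadFacts hUV hUn hVn hUl hVl hR₁n hR₁l hvr₁V hvr₁R hP₁l hP₁vr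
      hur₁U hur₁R hQ₁l hQ₁ur hup₁U hup₁P hS₁up hvq₁V hvq₁Q hS₁vq
  obtain ⟨hvr₂l, _, hvr₂n, _, hP₂n, _, hP₂Q, hvr₂ur, hup₂vq, hup₂l, _,
    hup₂n, _, hS₂U, hS₂V, hS₂n, hS₂l, hS₂R, hR₂up, hvr₂vq, hS₂vr, hQvr₂, hQup₂⟩ :=
    quadFacts hUV hUn hVn hUl hVl hR₂n hR₂l hvr₂V hvr₂R hP₂l hP₂vr
      hur₁U hur₁R₂ hQ₂l hQ₂ur hup₂U hup₂P hS₂up hvq₁V hvq₁Q hS₂vq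
  -- distinctness of the two triangles
  have hP12 : P₁ ≠ P₂ := by
    intro h
    have hVP₁ : V ≠ P₁ := by rintro rfl; exact hVl hP₁l
    have h1 : vr₁ = vr₂ := line_eq hVP₁ hvr₁V hP₁vr hvr₂V (h ▸ hP₂vr)
    have h2 : R₁ = R₂ := pt_eq hvr₁ur hvr₁R hur₁R (h1 ▸ hvr₂R) hur₁R₂
    exact hR12 h2
  have hvr12 : vr₁ ≠ vr₂ := by
    intro h
    exact hP12 (pt_eq hvr₁l hP₁vr hP₁l (h ▸ hP₂vr) hP₂l)
  have hup12 : up₁ ≠ up₂ := by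
    intro h
    exact hP12 (pt_eq hup₁l hup₁P hP₁l (h ▸ hup₂P) hP₂l)
  have hS12 : S₁ ≠ S₂ := by
    intro h
    exact hS₁U (pt_eq hup12 hS₁up (h ▸ hS₂up) hup₁U hup₂U)
  set rs₁ : L := mkLine hS₁R.symm with hrs₁def
  set rs₂ : L := mkLine hS₂R.symm with hrs₂def
  have hrs₁R : R₁ ∈ rs₁ := jn_left _
  have hrs₁S : S₁ ∈ rs₁ := jn_right _
  have hrs₂R : R₂ ∈ rs₂ := jn_left _
  have hrs₂S : S₂ ∈ rs₂ := jn_right _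
  have hD₁rs : D₁ ∈ rs₁ := col_in hD₁c hS₁R.symm hrs₁R hrs₁S
  have hD₂rs : D₂ ∈ rs₂ := col_in hD₂c hS₂R.symm hrs₂R hrs₂S
  have hrs₁n : rs₁ ≠ n := fun h => hR₁n (h ▸ hrs₁R)
  have hrs₂n : rs₂ ≠ n := fun h => hR₂n (h ▸ hrs₂R)
  have hR₁P₁ : R₁ ≠ P₁ := by rintro rfl; exact hR₁l hP₁l
  have hR₂P₂ : R₂ ≠ P₂ := by rintro rfl; exact hR₂l hP₂l
  have hR₁Q : R₁ ≠ Q₂ := by rintro rfl; exact hR₁l hQ₁l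
  have hR₂Q : R₂ ≠ Q₂ := by rintro rfl; exact hR₂l hQ₂l
  have hP₁rs : P₁ ∉ rs₁ := by
    intro h
    have h1 : rs₁ = vr₁ := line_eq hR₁P₁ hrs₁R h hvr₁R hP₁vr
    exact hS₁vr (h1 ▸ hrs₁S)
  have hP₂rs : P₂ ∉ rs₂ := by
    intro h
    have h1 : rs₂ = vr₂ := line_eq hR₂P₂ hrs₂R h hvr₂R hP₂vr
    exact hS₂vr (h1 ▸ hrs₂S)
  have hQrs₁ : Q₂ ∉ rs₁ := by
    intro h
    have h1 : rs₁ = ur₁ := line_eq hR₁Q hrs₁R h hur₁R hQ₁ur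
    have h2 : ur₁ = up₁ := line_eq hS₁U.symm hur₁U (h1 ▸ hrs₁S) hup₁U hS₁up
    exact hR₁up (h2 ▸ hur₁R)
  have hQrs₂ : Q₂ ∉ rs₂ := by
    intro h
    have h1 : rs₂ = ur₁ := line_eq hR₂Q hrs₂R h hur₁R₂ hQ₂ur
    have h2 : ur₁ = up₂ := line_eq hS₂U.symm hur₁U (h1 ▸ hrs₂S) hup₂U hS₂up
    exact hR₂up (h2 ▸ hur₁R₂)
  have hrs12 : rs₁ ≠ rs₂ := by
    intro h
    have h1 : rs₁ = ur₁ := line_eq hR12 hrs₁R (h ▸ hrs₂R) hur₁R hur₁R₂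
    have h2 : ur₁ = up₁ := line_eq hS₁U.symm hur₁U (h1 ▸ hrs₁S) hup₁U hS₁up
    exact hR₁up (h2 ▸ hur₁R)
  -- Desargues
  obtain ⟨ax, ⟨X, hXa, hXb, hXc⟩, ⟨Y, hYa, hYb, hYc⟩, ⟨Z, hZa, hZb, hZc⟩, _⟩ :=
    hdes R₁ P₁ S₁ R₂ P₂ S₂ vr₁ up₁ rs₁ vr₂ up₂ rs₂ Q₂
      ⟨hvr₁R, hP₁vr, hup₁P, hS₁up, hrs₁S, hrs₁R, hR₁up, hP₁rs, hS₁vr⟩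
      ⟨hvr₂R, hP₂vr, hup₂P, hS₂up, hrs₂S, hrs₂R, hR₂up, hP₂rs, hS₂vr⟩
      ⟨hR12, hP12, hS12, hvr12, hup12, hrs12⟩
      ⟨⟨ur₁, hur₁R, hur₁R₂, hQ₂ur⟩, ⟨l, hP₁l, hP₂l, hQ₂l⟩, ⟨vq₁, hS₁vq, hS₂vq, hvq₁Q⟩,
        hQvr₁, hQup₁, hQrs₁, hQvr₂, hQup₂, hQrs₂⟩
  have hXV : X = V := pt_eq hvr12 hXa hXb hvr₁V hvr₂V
  have hYU : Y = U := pt_eq hup12 hYa hYb hup₁U hup₂U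
  have haxn : ax = n := line_eq hUV (hYU ▸ hYc) (hXV ▸ hXc) hUn hVn
  have hZD₁ : Z = D₁ := pt_eq hrs₁n hZa (haxn ▸ hZc) hD₁rs hD₁n
  have hZD₂ : Z = D₂ := pt_eq hrs₂n hZb (haxn ▸ hZc) hD₂rs hD₂n
  exact hZD₁ ▸ hZD₂

end PQAux
namespace PQAux

open Configuration Configuration.Nondegenerate Configuration.HasLines Configuration.HasPoints

variable {P L : Type u} [Membership P L] [Configuration.ProjectivePlane P L]

lemma card6 {α : Type u} [DecidableEq α] (a b c d e f : α) :
    ({a, b, c, d, e, f} : Finset α).card < 8 := by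
  have h1 := Finset.card_insert_le a ({b, c, d, e, f} : Finset α)
  have h2 := Finset.card_insert_le b ({c, d, e, f} : Finset α)
  have h3 := Finset.card_insert_le c ({d, e, f} : Finset α)
  have h4 := Finset.card_insert_le d ({e, f} : Finset α)
  have h5 := Finset.card_insert_le e ({f} : Finset α)
  have h6 : ({f} : Finset α).card = 1 := Finset.card_singleton f
  show (insert a ({b, c, d, e, f} : Finset α)).card < 8
  omega

/-- The canonical quadrangle construction at an auxiliary point `R`. -/
lemma quadExists {n l : L} {U V R : P}
    (hUV : U ≠ V) (hUn : U ∈ n) (hVn : V ∈ n) (hUl : U ∉ l) (hVl : V ∉ l)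
    (hRn : R ∉ n) (hRl : R ∉ l) :
    ∃ Pp Q S D : P, Pp ∈ l ∧ Col P L V R Pp ∧ Q ∈ l ∧ Col P L U R Q ∧
      Col P L U Pp S ∧ Col P L V Q S ∧ D ∈ n ∧ Col P L R S D := by
  have hVR : V ≠ R := by rintro rfl; exact hRn hVn
  have hUR : U ≠ R := by rintro rfl; exact hRn hUn
  have hvrl : (mkLine hVR : L) ≠ l := fun h => hRl (h ▸ jn_right hVR)
  have hurl : (mkLine hUR : L) ≠ l := fun h => hRl (h ▸ jn_right hUR)
  set Pp : P := mkPoint hvrl with hPpdef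
  set Q : P := mkPoint hurl with hQdef
  have hPl : Pp ∈ l := mt_right _
  have hPvr : Pp ∈ (mkLine hVR : L) := mt_left _
  have hQl : Q ∈ l := mt_right _
  have hQur : Q ∈ (mkLine hUR : L) := mt_left _
  have hUP : U ≠ Pp := fun h => hUl (h ▸ hPl)
  have hVQ : V ≠ Q := fun h => hVl (h ▸ hQl)
  have hupvq : (mkLine hUP : L) ≠ mkLine hVQ := by
    intro h
    have h1 : (mkLine hUP : L) = n := line_eq hUV (jn_left _) (h ▸ jn_left hVQ) hUn hVn
    have h2 : Pp ∈ n := h1 ▸ jn_right hUP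
    have hvrn : (mkLine hVR : L) ≠ n := fun hh => hRn (hh ▸ jn_right hVR)
    have h3 : Pp = V := pt_eq hvrn hPvr h2 (jn_left hVR) hVn
    exact hVl (h3 ▸ hPl)
  set S : P := mkPoint hupvq with hSdef
  have hSup : S ∈ (mkLine hUP : L) := mt_left _
  have hSvq : S ∈ (mkLine hVQ : L) := mt_right _
  have hRP : R ≠ Pp := fun h => hRl (h ▸ hPl)
  have hRS : R ≠ S := by
    intro h
    have h1 : R ∈ (mkLine hUP : L) := h ▸ hSup
    have h2 : (mkLine hUP : L) = mkLine hVR :=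
      line_eq hRP.symm (jn_right hUP) h1 hPvr (jn_right hVR)
    have h3 : (mkLine hVR : L) = n :=
      line_eq hUV (h2 ▸ jn_left hUP) (jn_left hVR) hUn hVn
    exact hRn (h3 ▸ jn_right hVR)
  have hrsn : (mkLine hRS : L) ≠ n := fun h => hRn (h ▸ jn_left hRS)
  refine ⟨Pp, Q, S, mkPoint hrsn, hPl, ⟨mkLine hVR, jn_left _, jn_right _, hPvr⟩, hQl,
    ⟨mkLine hUR, jn_left _, jn_right _, hQur⟩,
    ⟨mkLine hUP, jn_left _, jn_right _, hSup⟩,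
    ⟨mkLine hVQ, jn_left _, jn_right _, hSvq⟩, mt_right _,
    ⟨mkLine hRS, jn_left _, jn_right _, mt_left _⟩⟩

/-- The output of the harmonic quadrangle construction is determined by `R`. -/
lemma quadDet {n l : L} {U V R P₁ Q₁ S₁ D₁ P₂ Q₂ S₂ D₂ : P}
    (hUV : U ≠ V) (hUn : U ∈ n) (hVn : V ∈ n) (hUl : U ∉ l) (hVl : V ∉ l)
    (hRn : R ∉ n) (hRl : R ∉ l)
    (hP₁l : P₁ ∈ l) (hP₁c : Col P L V R P₁) (hQ₁l : Q₁ ∈ l) (hQ₁c : Col P L U R Q₁)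
    (hS₁P : Col P L U P₁ S₁) (hS₁Q : Col P L V Q₁ S₁)
    (hD₁n : D₁ ∈ n) (hD₁c : Col P L R S₁ D₁)
    (hP₂l : P₂ ∈ l) (hP₂c : Col P L V R P₂) (hQ₂l : Q₂ ∈ l) (hQ₂c : Col P L U R Q₂)
    (hS₂P : Col P L U P₂ S₂) (hS₂Q : Col P L V Q₂ S₂)
    (hD₂n : D₂ ∈ n) (hD₂c : Col P L R S₂ D₂) : D₁ = D₂ := by
  have hVR : V ≠ R := by rintro rfl; exact hRn hVn
  have hUR : U ≠ R := by rintro rfl; exact hRn hUn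
  have hvrl : (mkLine hVR : L) ≠ l := fun h => hRl (h ▸ jn_right hVR)
  have hurl : (mkLine hUR : L) ≠ l := fun h => hRl (h ▸ jn_right hUR)
  have hP₁vr : P₁ ∈ (mkLine hVR : L) := col_in hP₁c hVR (jn_left _) (jn_right _)
  have hP₂vr : P₂ ∈ (mkLine hVR : L) := col_in hP₂c hVR (jn_left _) (jn_right _)
  have hP21 : P₂ = P₁ := pt_eq hvrl hP₂vr hP₂l hP₁vr hP₁l
  subst hP21
  have hQ₁ur : Q₁ ∈ (mkLine hUR : L) := col_in hQ₁c hUR (jn_left _) (jn_right _)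
  have hQ₂ur : Q₂ ∈ (mkLine hUR : L) := col_in hQ₂c hUR (jn_left _) (jn_right _)
  have hQ21 : Q₂ = Q₁ := pt_eq hurl hQ₂ur hQ₂l hQ₁ur hQ₁l
  subst hQ21
  have hUP : U ≠ P₂ := fun h => hUl (h ▸ hP₂l)
  have hVQ : V ≠ Q₂ := fun h => hVl (h ▸ hQ₂l)
  have hupvq : (mkLine hUP : L) ≠ mkLine hVQ := by
    intro h
    have h1 : (mkLine hUP : L) = n := line_eq hUV (jn_left _) (h ▸ jn_left hVQ) hUn hVn
    have h2 : P₂ ∈ n := h1 ▸ jn_right hUP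
    have hvrn : (mkLine hVR : L) ≠ n := fun hh => hRn (hh ▸ jn_right hVR)
    have h3 : P₂ = V := pt_eq hvrn hP₂vr h2 (jn_left hVR) hVn
    exact hVl (h3 ▸ hP₂l)
  have hS₁up : S₁ ∈ (mkLine hUP : L) := col_in hS₁P hUP (jn_left _) (jn_right _)
  have hS₂up : S₂ ∈ (mkLine hUP : L) := col_in hS₂P hUP (jn_left _) (jn_right _)
  have hS₁vq : S₁ ∈ (mkLine hVQ : L) := col_in hS₁Q hVQ (jn_left _) (jn_right _)
  have hS₂vq : S₂ ∈ (mkLine hVQ : L) := col_in hS₂Q hVQ (jn_left _) (jn_right _)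
  have hS21 : S₂ = S₁ := pt_eq hupvq hS₂up hS₂vq hS₁up hS₁vq
  subst hS21
  have hRP : R ≠ P₂ := fun h => hRl (h ▸ hP₂l)
  have hRS : R ≠ S₂ := by
    intro h
    have h1 : R ∈ (mkLine hUP : L) := h ▸ hS₂up
    have h2 : (mkLine hUP : L) = mkLine hVR :=
      line_eq hRP.symm (jn_right hUP) h1 hP₂vr (jn_right hVR)
    have h3 : (mkLine hVR : L) = n :=
      line_eq hUV (h2 ▸ jn_left hUP) (jn_left hVR) hUn hVn
    exact hRn (h3 ▸ jn_right hVR)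
  have hrsn : (mkLine hRS : L) ≠ n := fun h => hRn (h ▸ jn_left hRS)
  have hD₁rs : D₁ ∈ (mkLine hRS : L) := col_in hD₁c hRS (jn_left _) (jn_right _)
  have hD₂rs : D₂ ∈ (mkLine hRS : L) := col_in hD₂c hRS (jn_left _) (jn_right _)
  exact pt_eq hrsn hD₁rs hD₁n hD₂rs hD₂n

end PQAux
namespace PQAux

open Configuration Configuration.Nondegenerate Configuration.HasLines Configuration.HasPoints

variable {P L : Type u} [Membership P L] [Configuration.ProjectivePlane P L]

/-- Uniqueness of the harmonic-quadrangle output over a fixed auxiliary line `l`. -/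
lemma samel_unique (hdes : DesarguesProperty P L) (h8 : LinesHaveAtLeast P L 8)
    {n l : L} {U V R₁ P₁ Q₁ S₁ D₁ R₂ P₂ Q₂ S₂ D₂ : P}
    (hUV : U ≠ V) (hUn : U ∈ n) (hVn : V ∈ n) (hUl : U ∉ l) (hVl : V ∉ l)
    (hR₁n : R₁ ∉ n) (hR₁l : R₁ ∉ l)
    (hP₁l : P₁ ∈ l) (hP₁c : Col P L V R₁ P₁) (hQ₁l : Q₁ ∈ l) (hQ₁c : Col P L U R₁ Q₁)
    (hS₁P : Col P L U P₁ S₁) (hS₁Q : Col P L V Q₁ S₁)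
    (hD₁n : D₁ ∈ n) (hD₁c : Col P L R₁ S₁ D₁)
    (hR₂n : R₂ ∉ n) (hR₂l : R₂ ∉ l)
    (hP₂l : P₂ ∈ l) (hP₂c : Col P L V R₂ P₂) (hQ₂l : Q₂ ∈ l) (hQ₂c : Col P L U R₂ Q₂)
    (hS₂P : Col P L U P₂ S₂) (hS₂Q : Col P L V Q₂ S₂)
    (hD₂n : D₂ ∈ n) (hD₂c : Col P L R₂ S₂ D₂) : D₁ = D₂ := by
  classical
  by_cases hRR : R₁ = R₂
  · subst hRR
    exact quadDet hUV hUn hVn hUl hVl hR₁n hR₁l hP₁l hP₁c hQ₁l hQ₁c hS₁P hS₁Q hD₁n hD₁c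
      hP₂l hP₂c hQ₂l hQ₂c hS₂P hS₂Q hD₂n hD₂c
  have hUR₁ : U ≠ R₁ := by rintro rfl; exact hR₁n hUn
  have hUR₂ : U ≠ R₂ := by rintro rfl; exact hR₂n hUn
  have hVR₂ : V ≠ R₂ := by rintro rfl; exact hR₂n hVn
  by_cases hR₂u₁ : R₂ ∈ (mkLine hUR₁ : L)
  · exact stepU hdes hUV hUn hVn hUl hVl hR₁n hR₁l hP₁l hP₁c hQ₁l hQ₁c hS₁P hS₁Q hD₁n hD₁c
      hR₂n hR₂l hP₂l hP₂c hQ₂l hQ₂c hS₂P hS₂Q hD₂n hD₂c hRR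
      ⟨mkLine hUR₁, jn_left _, jn_right _, hR₂u₁⟩
  have hu₁n : (mkLine hUR₁ : L) ≠ n := fun h => hR₁n (h ▸ jn_right _)
  have hu₂n : (mkLine hUR₂ : L) ≠ n := fun h => hR₂n (h ▸ jn_right _)
  have hu₁l : (mkLine hUR₁ : L) ≠ l := fun h => hR₁l (h ▸ jn_right _)
  have hu₂l : (mkLine hUR₂ : L) ≠ l := fun h => hR₂l (h ▸ jn_right _)
  have hu₂u₁ : (mkLine hUR₂ : L) ≠ mkLine hUR₁ := fun h => hR₂u₁ (h ▸ jn_right hUR₂)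
  set QQ : P := mkPoint hu₁l with hQQdef
  set QQ₂ : P := mkPoint hu₂l with hQQ₂def
  have hVQQ₂ : V ≠ QQ₂ := fun h => hVl (h ▸ mt_right hu₂l)
  have hvqq₂u₁ : (mkLine hVQQ₂ : L) ≠ mkLine hUR₁ := by
    intro h
    have h1 : U ∈ (mkLine hVQQ₂ : L) := h ▸ jn_left hUR₁
    have h2 : (mkLine hVQQ₂ : L) = n := line_eq hUV h1 (jn_left _) hUn hVn
    have h3 : QQ₂ ∈ n := h2 ▸ jn_right hVQQ₂
    have h4 : QQ₂ = U := pt_eq hu₂n (mt_left hu₂l) h3 (jn_left _) hUn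
    exact hUl (h4 ▸ mt_right hu₂l)
  have hvr₂u₁ : (mkLine hVR₂ : L) ≠ mkLine hUR₁ := by
    intro h
    have h1 : U ∈ (mkLine hVR₂ : L) := h ▸ jn_left hUR₁
    have h2 : (mkLine hVR₂ : L) = n := line_eq hUV h1 (jn_left _) hUn hVn
    exact hR₂n (h2 ▸ jn_right hVR₂)
  obtain ⟨A₁, hA₁u₁, hA₁bad⟩ := pick h8 (mkLine hUR₁)
    {U, QQ, R₁, mkPoint hvqq₂u₁, mkPoint hu₂u₁, mkPoint hvr₂u₁} (card6 _ _ _ _ _ _)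
  simp only [Finset.mem_insert, Finset.mem_singleton, not_or] at hA₁bad
  obtain ⟨hA₁U, hA₁QQ, hA₁R₁, hA₁x₁, hA₁x₂, hA₁x₃⟩ := hA₁bad
  have hA₁n : A₁ ∉ n := fun h => hA₁U (pt_eq hu₁n hA₁u₁ h (jn_left _) hUn)
  have hA₁l : A₁ ∉ l := fun h => hA₁QQ (pt_eq hu₁l hA₁u₁ h (mt_left _) (mt_right _))
  have hVA₁ : V ≠ A₁ := by rintro rfl; exact hA₁n hVn
  have hva₁u₂ : (mkLine hVA₁ : L) ≠ mkLine hUR₂ := by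
    intro h
    have h1 : U ∈ (mkLine hVA₁ : L) := h ▸ jn_left hUR₂
    have h2 : (mkLine hVA₁ : L) = n := line_eq hUV h1 (jn_left _) hUn hVn
    exact hA₁n (h2 ▸ jn_right hVA₁)
  set A₂ : P := mkPoint hva₁u₂ with hA₂def
  have hA₂va : A₂ ∈ (mkLine hVA₁ : L) := mt_left _
  have hA₂u₂ : A₂ ∈ (mkLine hUR₂ : L) := mt_right _
  have hA₂n : A₂ ∉ n := by
    intro h
    have h1 : A₂ = U := pt_eq hu₂n hA₂u₂ h (jn_left _) hUn
    have h2 : U ∈ (mkLine hVA₁ : L) := h1 ▸ hA₂va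
    have h3 : (mkLine hVA₁ : L) = n := line_eq hUV h2 (jn_left _) hUn hVn
    exact hA₁n (h3 ▸ jn_right hVA₁)
  have hA₂l : A₂ ∉ l := by
    intro h
    have h1 : A₂ = QQ₂ := pt_eq hu₂l hA₂u₂ h (mt_left _) (mt_right _)
    have h2 : QQ₂ ∈ (mkLine hVA₁ : L) := h1 ▸ hA₂va
    have h3 : (mkLine hVQQ₂ : L) = mkLine hVA₁ :=
      line_eq hVQQ₂ (jn_left _) (jn_right _) (jn_left hVA₁) h2
    have h4 : A₁ ∈ (mkLine hVQQ₂ : L) := h3 ▸ jn_right hVA₁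
    exact hA₁x₁ (pt_eq hvqq₂u₁ h4 hA₁u₁ (mt_left _) (mt_right _))
  have hA₂A₁ : A₂ ≠ A₁ := by
    intro h
    have h1 : A₁ ∈ (mkLine hUR₂ : L) := h ▸ hA₂u₂
    exact hA₁x₂ (pt_eq hu₂u₁ h1 hA₁u₁ (mt_left _) (mt_right _))
  have hA₂R₂ : A₂ ≠ R₂ := by
    intro h
    have h1 : R₂ ∈ (mkLine hVA₁ : L) := h ▸ hA₂va
    have h2 : (mkLine hVR₂ : L) = mkLine hVA₁ :=
      line_eq hVR₂ (jn_left _) (jn_right _) (jn_left hVA₁) h1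
    have h3 : A₁ ∈ (mkLine hVR₂ : L) := h2 ▸ jn_right hVA₁
    exact hA₁x₃ (pt_eq hvr₂u₁ h3 hA₁u₁ (mt_left _) (mt_right _))
  obtain ⟨Pa, Qa, Sa, Da, hPal, hPac, hQal, hQac, hSaP, hSaQ, hDan, hDac⟩ :=
    quadExists hUV hUn hVn hUl hVl hA₁n hA₁l
  obtain ⟨Pb, Qb, Sb, Db, hPbl, hPbc, hQbl, hQbc, hSbP, hSbQ, hDbn, hDbc⟩ :=
    quadExists hUV hUn hVn hUl hVl hA₂n hA₂l
  have e1 : D₁ = Da :=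
    stepU hdes hUV hUn hVn hUl hVl hR₁n hR₁l hP₁l hP₁c hQ₁l hQ₁c hS₁P hS₁Q hD₁n hD₁c
      hA₁n hA₁l hPal hPac hQal hQac hSaP hSaQ hDan hDac (Ne.symm hA₁R₁)
      ⟨mkLine hUR₁, jn_left _, jn_right _, hA₁u₁⟩
  have e2 : Da = Db :=
    stepU hdes hUV.symm hVn hUn hVl hUl hA₁n hA₁l hQal hQac hPal hPac hSaQ hSaP hDan hDac
      hA₂n hA₂l hQbl hQbc hPbl hPbc hSbQ hSbP hDbn hDbc hA₂A₁.symm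
      ⟨mkLine hVA₁, jn_left _, jn_right _, hA₂va⟩
  have e3 : Db = D₂ :=
    stepU hdes hUV hUn hVn hUl hVl hA₂n hA₂l hPbl hPbc hQbl hQbc hSbP hSbQ hDbn hDbc
      hR₂n hR₂l hP₂l hP₂c hQ₂l hQ₂c hS₂P hS₂Q hD₂n hD₂c hA₂R₂
      ⟨mkLine hUR₂, jn_left _, hA₂u₂, jn_right _⟩
  exact (e1.trans e2).trans e3

end PQAux
namespace PQAux

open Configuration Configuration.Nondegenerate Configuration.HasLines Configuration.HasPoints

variable {P L : Type u} [Membership P L] [Configuration.ProjectivePlane P L]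

/-- A presentation of the conic `κ` from the pair of points `(U, V)`. -/
def Pres (L : Type u) [Membership P L] [Configuration.ProjectivePlane P L] (κ : Set P) (U V : P) : Prop :=
  U ≠ V ∧ ∃ π : {k : L // U ∈ k} → {k : L // V ∈ k},
    IsProj P L (.pencil U) (.pencil V) π ∧ (∀ k, ((π k : L)) ≠ (k : L)) ∧
    κ = conicSet P L U V π

lemma conic_mem_π {U V : P} {π : {k : L // U ∈ k} → {k : L // V ∈ k}}
    {X : P} (hX : X ∈ conicSet P L U V π) {k : L} (hU : U ∈ k) (hXk : X ∈ k)
    (hXU : X ≠ U) : X ∈ ((π ⟨k, hU⟩ : L)) := by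
  obtain ⟨k', hXk', hXπ⟩ := hX
  have h2 : k' = (⟨k, hU⟩ : {k : L // U ∈ k}) :=
    Subtype.ext (line_eq hXU hXk' k'.2 hXk hU)
  exact h2 ▸ hXπ

lemma swap_pres {κ : Set P} {U V : P} (hp : Pres L κ U V) : Pres L κ V U := by
  obtain ⟨hUV, π, hπ, hnp, hκ⟩ := hp
  obtain ⟨π', hπ', hl, hr⟩ := proj_inv hπ
  refine ⟨hUV.symm, π', hπ', ?_, ?_⟩
  · intro k h
    exact hnp (π' k) ((congrArg Subtype.val (hr k)).trans h.symm)
  · rw [hκ]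
    ext X
    constructor
    · rintro ⟨k, h1, h2⟩
      exact ⟨π k, h2, by rw [hl k]; exact h1⟩
    · rintro ⟨k, h1, h2⟩
      exact ⟨π' k, h2, by rw [hr k]; exact h1⟩

lemma V_mem_conic {U V : P} (hUV : U ≠ V) {π : {k : L // U ∈ k} → {k : L // V ∈ k}} :
    V ∈ conicSet P L U V π :=
  ⟨⟨mkLine hUV, jn_left hUV⟩, jn_right hUV, (π _).2⟩

/-- The tangent at `V` : the image of the line `UV` under `π`. -/
lemma tangent_V {U V : P} (hUV : U ≠ V) {π : {k : L // U ∈ k} → {k : L // V ∈ k}}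
    (hπ : IsProj P L (.pencil U) (.pencil V) π) (hnp : ∀ k, ((π k : L)) ≠ (k : L)) :
    IsTangent P L (conicSet P L U V π) ((π ⟨mkLine hUV, jn_left hUV⟩ : L)) V := by
  set uv : L := mkLine hUV with huv
  set tV : L := (π ⟨uv, jn_left hUV⟩ : L) with htV
  have htVuv : tV ≠ uv := hnp _
  have hUtV : U ∉ tV := by
    intro h
    exact htVuv (line_eq hUV h (π _).2 (jn_left hUV) (jn_right hUV))
  refine ⟨V_mem_conic hUV, (π _).2, ?_⟩
  intro X hX hXtV
  by_contra hXV
  have hXU : X ≠ U := fun h => hUtV (h ▸ hXtV)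
  obtain ⟨k, hXk, hXπ⟩ := hX
  have hkuv : (k : L) ≠ uv := by
    intro h
    have h1 : k = (⟨uv, jn_left hUV⟩ : {k : L // U ∈ k}) := Subtype.ext h
    rw [h1] at hXπ
    exact hXV (pt_eq htVuv hXπ (h ▸ hXk) (π _).2 (jn_right hUV))
  -- X ≠ V, so π k = line V X and tV = line V X would force π k = tV, k = uv
  have hπk : (π k : L) = mkLine (Ne.symm hXV : V ≠ X) :=
    line_eq (Ne.symm hXV) (π k).2 hXπ (jn_left _) (jn_right _)
  have htV' : tV = mkLine (Ne.symm hXV : V ≠ X) :=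
    line_eq (Ne.symm hXV) ((π _).2) hXtV (jn_left _) (jn_right _)
  have h2 : π k = π ⟨uv, jn_left hUV⟩ := Subtype.ext (hπk.trans htV'.symm)
  have h3 : k = (⟨uv, jn_left hUV⟩ : {k : L // U ∈ k}) := proj_inj hπ h2
  exact hkuv (congrArg Subtype.val h3)

/-- No three distinct points of a conic are collinear. -/
lemma conic_not3col (hT : AxiomT P L) {κ : Set P} {U V : P} (hp : Pres L κ U V)
    {X Y Z : P} (hX : X ∈ κ) (hY : Y ∈ κ) (hZ : Z ∈ κ)
    (hXY : X ≠ Y) (hXZ : X ≠ Z) (hYZ : Y ≠ Z) : ¬ Col P L X Y Z := by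
  obtain ⟨hUV, π, hπ, hnp, hκ⟩ := hp
  subst hκ
  rintro ⟨ℓ, hXℓ, hYℓ, hZℓ⟩
  -- first: a helper killing the case of two points other than U on ℓ with U ∈ ℓ
  have caseU : U ∈ ℓ → ∀ {W W' : P}, W ∈ conicSet P L U V π → W' ∈ conicSet P L U V π →
      W ∈ ℓ → W' ∈ ℓ → W ≠ W' → W ≠ U → W' ≠ U → False := by
    intro hUℓ W W' hW hW' hWℓ hW'ℓ hWW' hWU hW'U
    have h1 : W ∈ ((π ⟨ℓ, hUℓ⟩ : L)) := conic_mem_π hW hUℓ hWℓ hWU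
    have h2 : W' ∈ ((π ⟨ℓ, hUℓ⟩ : L)) := conic_mem_π hW' hUℓ hW'ℓ hW'U
    exact hWW' (pt_eq (hnp ⟨ℓ, hUℓ⟩) h1 hWℓ h2 hW'ℓ)
  have caseV : V ∈ ℓ → U ∉ ℓ → ∀ {W W' : P}, W ∈ conicSet P L U V π →
      W' ∈ conicSet P L U V π → W ∈ ℓ → W' ∈ ℓ → W ≠ W' → W ≠ V → W' ≠ V → False := by
    intro hVℓ hUℓ W W' hW hW' hWℓ hW'ℓ hWW' hWV hW'V
    obtain ⟨k, hWk, hWπ⟩ := hW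
    obtain ⟨k', hW'k, hW'π⟩ := hW'
    have h1 : (π k : L) = ℓ := line_eq (Ne.symm hWV) (π k).2 hWπ hVℓ hWℓ
    have h2 : (π k' : L) = ℓ := line_eq (Ne.symm hW'V) (π k').2 hW'π hVℓ hW'ℓ
    have h3 : k = k' := proj_inj hπ (Subtype.ext (h1.trans h2.symm))
    have hkℓ : (k : L) ≠ ℓ := fun h => hUℓ (h ▸ k.2)
    exact hWW' (pt_eq hkℓ hWk hWℓ (h3 ▸ hW'k) hW'ℓ)
  by_cases hUℓ : U ∈ ℓ
  · by_cases hXU : X = U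
    · subst hXU
      exact caseU hUℓ hY hZ hYℓ hZℓ hYZ (Ne.symm hXY) (Ne.symm hXZ)
    · by_cases hYU : Y = U
      · subst hYU
        exact caseU hUℓ hX hZ hXℓ hZℓ hXZ hXU (Ne.symm hYZ)
      · exact caseU hUℓ hX hY hXℓ hYℓ hXY hXU hYU
  by_cases hVℓ : V ∈ ℓ
  · by_cases hXV : X = V
    · subst hXV
      exact caseV hVℓ hUℓ hY hZ hYℓ hZℓ hYZ (Ne.symm hXY) (Ne.symm hXZ)
    · by_cases hYV : Y = V
      · subst hYV
        exact caseV hVℓ hUℓ hX hZ hXℓ hZℓ hXZ hXV (Ne.symm hYZ)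
      · exact caseV hVℓ hUℓ hX hY hXℓ hYℓ hXY hXV hYV
  -- main case: U ∉ ℓ, V ∉ ℓ
  have hUW : ∀ W : {X : P // X ∈ ℓ}, U ≠ (W : P) := fun W h => hUℓ (h ▸ W.2)
  have hkℓ : ∀ k : {k : L // V ∈ k}, (k : L) ≠ ℓ := fun k h => hVℓ (h ▸ k.2)
  set f : {X : P // X ∈ ℓ} → {k : L // U ∈ k} :=
    fun W => ⟨mkLine (hUW W), jn_left _⟩ with hf
  set g : {k : L // V ∈ k} → {X : P // X ∈ ℓ} :=
    fun k => ⟨mkPoint (hkℓ k), mt_right _⟩ with hg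
  have hφ : IsProj P L (.range ℓ) (.range ℓ) (g ∘ (π ∘ f)) :=
    .comp (.comp (.elemInv ⟨hUℓ, fun W => jn_right _⟩) hπ) (.elem ⟨hVℓ, fun k => mt_left _⟩)
  have hfixgen : ∀ (W : P) (hWℓ : W ∈ ℓ), W ∈ conicSet P L U V π →
      (g ∘ (π ∘ f)) ⟨W, hWℓ⟩ = ⟨W, hWℓ⟩ := by
    intro W hWℓ hW
    have h1 : W ∈ ((π (f ⟨W, hWℓ⟩) : L)) :=
      conic_mem_π hW (jn_left (hUW ⟨W, hWℓ⟩)) (jn_right _) (Ne.symm (hUW ⟨W, hWℓ⟩))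
    exact Subtype.ext (mt_eq (hkℓ (π (f ⟨W, hWℓ⟩))) h1 hWℓ)
  have hid : ∀ w, (g ∘ (π ∘ f)) w = w := by
    refine hT (.range ℓ) _ hφ ⟨⟨X, hXℓ⟩, ⟨Y, hYℓ⟩, ⟨Z, hZℓ⟩, ?_, ?_, ?_,
      hfixgen X hXℓ hX, hfixgen Y hYℓ hY, hfixgen Z hZℓ hZ⟩
    · exact fun h => hXY (congrArg Subtype.val h)
    · exact fun h => hXZ (congrArg Subtype.val h)
    · exact fun h => hYZ (congrArg Subtype.val h)
  -- derive a contradiction at the point uv ∩ ℓ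
  have huvℓ : (mkLine hUV : L) ≠ ℓ := fun h => hUℓ (h ▸ jn_left hUV)
  set W : P := mkPoint huvℓ with hW
  have hWℓ : W ∈ ℓ := mt_right _
  have hWU : W ≠ U := fun h => hUℓ (h ▸ hWℓ)
  have h1 := hid ⟨W, hWℓ⟩
  have h2 : W ∈ ((π (f ⟨W, hWℓ⟩) : L)) := by
    have h3 := mt_left (hkℓ (π (f ⟨W, hWℓ⟩)))
    rwa [show (mkPoint (hkℓ (π (f ⟨W, hWℓ⟩))) : P) = W from congrArg Subtype.val h1] at h3
  have h4 : (mkLine (hUW ⟨W, hWℓ⟩) : L) = mkLine hUV :=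
    line_eq (hUW ⟨W, hWℓ⟩).symm.symm (jn_left _) (jn_right _) (jn_left hUV) (mt_left huvℓ)
  have h5 : f ⟨W, hWℓ⟩ = (⟨mkLine hUV, jn_left hUV⟩ : {k : L // U ∈ k}) := Subtype.ext h4
  rw [h5] at h2
  have h6 : W = V := pt_eq (hnp ⟨mkLine hUV, jn_left hUV⟩) h2 (mt_left huvℓ)
    (π _).2 (jn_right hUV)
  exact hVℓ (h6 ▸ hWℓ)

end PQAux
namespace PQAux

open Configuration Configuration.Nondegenerate Configuration.HasLines Configuration.HasPoints

variable {P L : Type u} [Membership P L] [Configuration.ProjectivePlane P L]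

/-- Steiner's theorem, replacement step : the second base point of a conic
presentation can be moved to any other point of the conic. -/
lemma replace_pres (hdes : DesarguesProperty P L) (h8 : LinesHaveAtLeast P L 8)
    (hT : AxiomT P L) {κ : Set P} {U V B : P}
    (hp : Pres L κ U V) (hB : B ∈ κ) (hBU : B ≠ U) : Pres L κ U B := by
  classical
  obtain ⟨hUV, π, hπ, hnp, hκ⟩ := hp
  by_cases hBV : B = V
  · subst hBV; exact ⟨Ne.symm hBU, π, hπ, hnp, hκ⟩
  have hBκ : B ∈ conicSet P L U V π := hκ ▸ hB
  obtain ⟨π', hπ', hlinv, hrinv⟩ := proj_inv hπ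
  set uv : L := mkLine hUV with huvdef
  have huvU : U ∈ uv := jn_left hUV
  have huvV : V ∈ uv := jn_right hUV
  set tV : L := ((π ⟨uv, huvU⟩ : {k : L // V ∈ k}) : L) with htVdef
  set tU : L := ((π' ⟨uv, huvV⟩ : {k : L // U ∈ k}) : L) with htUdef
  have hVtV : V ∈ tV := (π ⟨uv, huvU⟩).2
  have hUtU : U ∈ tU := (π' ⟨uv, huvV⟩).2
  have htVuv : tV ≠ uv := hnp _
  have hsubtU : (⟨tU, hUtU⟩ : {k : L // U ∈ k}) = π' ⟨uv, huvV⟩ := Subtype.ext rfl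
  have hπtU : π ⟨tU, hUtU⟩ = ⟨uv, huvV⟩ := by rw [hsubtU]; exact hrinv _
  have htUuv : tU ≠ uv := by
    intro h
    have h1 : (⟨tU, hUtU⟩ : {k : L // U ∈ k}) = ⟨uv, huvU⟩ := Subtype.ext h
    have h2 := hπtU
    rw [h1] at h2
    exact htVuv (congrArg Subtype.val h2)
  have hUtV : U ∉ tV := fun h => htVuv (line_eq hUV h hVtV huvU huvV)
  have hVtU : V ∉ tU := fun h => htUuv (line_eq hUV hUtU h huvU huvV)
  have htUtV : tU ≠ tV := fun h => hVtU (h ▸ hVtV)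
  have hUB : U ≠ B := Ne.symm hBU
  have hVB : V ≠ B := Ne.symm hBV
  have hBuv : B ∉ uv := by
    intro h
    have h1 : B ∈ tV := conic_mem_π hBκ huvU h hBU
    exact hBV (pt_eq htVuv h1 h hVtV huvV)
  set ub : L := mkLine hUB with hubdef
  set vb : L := mkLine hVB with hvbdef
  have hUub : U ∈ ub := jn_left hUB
  have hBub : B ∈ ub := jn_right hUB
  have hVvb : V ∈ vb := jn_left hVB
  have hBvb : B ∈ vb := jn_right hVB
  have hUvb : U ∉ vb := fun h => hBuv ((line_eq hUV h hVvb huvU huvV) ▸ hBvb)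
  have hVub : V ∉ ub := fun h => hBuv ((line_eq hUV hUub h huvU huvV) ▸ hBub)
  have huvub : uv ≠ ub := fun h => hBuv (h ▸ hBub)
  have huvvb : uv ≠ vb := fun h => hBuv (h ▸ hBvb)
  have hubvb : ub ≠ vb := fun h => hUvb (h ▸ hUub)
  have hπub : ((π ⟨ub, hUub⟩ : {k : L // V ∈ k}) : L) = vb :=
    line_eq hVB (π _).2 (conic_mem_π hBκ hUub hBub hBU) hVvb hBvb
  -- the cross-center O
  have hUZvb : ∀ Z : {X : P // X ∈ vb}, U ≠ (Z : P) := fun Z h => hUvb (h ▸ Z.2)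
  have hkub : ∀ k : {k : L // V ∈ k}, (k : L) ≠ ub := fun k h => hVub (h ▸ k.2)
  set f1 : {X : P // X ∈ vb} → {k : L // U ∈ k} :=
    fun Z => ⟨mkLine (hUZvb Z), jn_left _⟩ with hf1def
  set f2 : {k : L // V ∈ k} → {X : P // X ∈ ub} :=
    fun k => ⟨mkPoint (hkub k), mt_right _⟩ with hf2def
  have hδproj : IsProj P L (.range vb) (.range ub) (f2 ∘ (π ∘ f1)) :=
    .comp (.comp (.elemInv ⟨hUvb, fun Z => jn_right _⟩) hπ) (.elem ⟨hVub, fun k => mt_left _⟩)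
  have hδfix : (((f2 ∘ (π ∘ f1)) ⟨B, hBvb⟩ : {X : P // X ∈ ub}) : P) = B := by
    have h1 : f1 ⟨B, hBvb⟩ = ⟨ub, hUub⟩ :=
      Subtype.ext (line_eq hUB (jn_left _) (jn_right _) hUub hBub)
    show ((f2 (π (f1 ⟨B, hBvb⟩))) : P) = B
    rw [h1]
    exact mt_eq (hkub _) (by rw [hπub]; exact hBvb) hBub
  obtain ⟨O, hOvb, hOub, hOcol⟩ := lemmaA hT h8 (Ne.symm hubvb) hδproj hBvb hBub hδfix
  have hmvb : ∀ m : {k : L // U ∈ k}, (m : L) ≠ vb := fun m h => hUvb (h ▸ m.2)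
  have hπmub : ∀ m : {k : L // U ∈ k}, ((π m : {k : L // V ∈ k}) : L) ≠ ub :=
    fun m => hkub (π m)
  have crossO : ∀ m : {k : L // U ∈ k},
      Col P L O (mkPoint (hmvb m)) (mkPoint (hπmub m)) := by
    intro m
    have h1 : f1 ⟨mkPoint (hmvb m), mt_right _⟩ = m :=
      Subtype.ext (line_eq (hUZvb ⟨mkPoint (hmvb m), mt_right _⟩) (jn_left _)
        (jn_right _) m.2 (mt_left _))
    have h2 := hOcol ⟨mkPoint (hmvb m), mt_right _⟩
    rw [show ((f2 ∘ (π ∘ f1)) ⟨mkPoint (hmvb m), mt_right _⟩) =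
        (⟨mkPoint (hπmub m), mt_right _⟩ : {X : P // X ∈ ub}) from by
      show f2 (π (f1 _)) = _
      rw [h1]] at h2
    exact h2
  have hOtV : O ∈ tV := by
    have h := crossO ⟨uv, huvU⟩
    have hP2 : mkPoint (hmvb ⟨uv, huvU⟩) = V := mt_eq _ huvV hVvb
    rw [hP2] at h
    have hT'tV : (mkPoint (hπmub ⟨uv, huvU⟩) : P) ∈ tV := mt_left _
    have hT'V : V ≠ mkPoint (hπmub ⟨uv, huvU⟩) := fun he => hVub (he ▸ mt_right (hπmub _))
    exact col_mem_line h hT'V hVtV hT'tV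
  set Zs : P := mkPoint (hmvb ⟨tU, hUtU⟩) with hZsdef
  have hZstU : Zs ∈ tU := mt_left _
  have hZsvb : Zs ∈ vb := mt_right _
  have hZsU : Zs ≠ U := fun h => hUvb (h ▸ hZsvb)
  have hP1tU : mkPoint (hπmub ⟨tU, hUtU⟩) = U := by
    refine mt_eq (hπmub _) ?_ hUub
    rw [show ((π ⟨tU, hUtU⟩ : {k : L // V ∈ k}) : L) = uv from congrArg Subtype.val hπtU]
    exact huvU
  have hOZsU : Col P L O Zs U := by
    have h := crossO ⟨tU, hUtU⟩
    rwa [hP1tU] at h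
  have hOtU : O ∈ tU := col_mem_line hOZsU hZsU hZstU hUtU
  have hOU : O ≠ U := fun h => hUtV (h ▸ hOtV)
  have hOV : O ≠ V := fun h => hVtU (h ▸ hOtU)
  have hOuv : O ∉ uv := by
    intro h
    have h1 : O = U := pt_eq htUuv hOtU h hUtU huvU
    exact hUtV (h1 ▸ hOtV)
  set ou : L := mkLine hOU with houdef
  have hOou : O ∈ ou := jn_left _
  have hUou : U ∈ ou := jn_right _
  have hZsou : Zs ∈ ou := col_in2 hOZsU hOU hOou hUou
  have houuv : ou ≠ uv := fun h => hOuv (h ▸ hOou)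
  have houtV : ou ≠ tV := fun h => hUtV (h ▸ hUou)
  have houvb : ou ≠ vb := fun h => hOvb (h ▸ hOou)
  obtain ⟨R', hR'ou, hR'bad⟩ := pick h8 ou {O, U} (card2 O U)
  simp only [Finset.mem_insert, Finset.mem_singleton, not_or] at hR'bad
  obtain ⟨hR'O, hR'U⟩ := hR'bad
  have hR'uv : R' ∉ uv := fun h => hR'U (pt_eq houuv hR'ou h hUou huvU)
  have hR'tV : R' ∉ tV := fun h => hR'O (pt_eq houtV hR'ou h hOou hOtV)
  have hVR' : V ≠ R' := fun h => hR'uv (h ▸ huvV)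
  set vr' : L := mkLine hVR' with hvr'def
  have hVvr' : V ∈ vr' := jn_left _
  have hR'vr' : R' ∈ vr' := jn_right _
  have hOvr' : O ∉ vr' := by
    intro h
    have h1 : vr' = tV := line_eq hOV.symm hVvr' h hVtV hOtV
    exact hR'tV (h1 ▸ hR'vr')
  have hUvr' : U ∉ vr' := by
    intro h
    have h1 : vr' = uv := line_eq hUV h hVvr' huvU huvV
    exact hR'uv (h1 ▸ hR'vr')
  have htVvr' : tV ≠ vr' := fun h => hR'tV (h.symm ▸ hR'vr')
  have hvr'uv : vr' ≠ uv := fun h => hR'uv (h ▸ hR'vr')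
  -- the new projectivity σ : U* → B*
  have hOZvb : ∀ Z : {X : P // X ∈ vb}, O ≠ (Z : P) := fun Z h => hOvb (h ▸ Z.2)
  have hkvr' : ∀ k : {k : L // O ∈ k}, (k : L) ≠ vr' := fun k h => hOvr' (h ▸ k.2)
  have hUWvr' : ∀ W : {X : P // X ∈ vr'}, U ≠ (W : P) := fun W h => hUvr' (h ▸ W.2)
  have hktV : ∀ k : {k : L // U ∈ k}, (k : L) ≠ tV := fun k h => hUtV (h ▸ k.2)
  have hR'StV : ∀ S : {X : P // X ∈ tV}, R' ≠ (S : P) := fun S h => hR'tV (h ▸ S.2)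
  have hkuv2 : ∀ k : {k : L // R' ∈ k}, (k : L) ≠ uv := fun k h => hR'uv (h ▸ k.2)
  have hBDuv : ∀ D : {X : P // X ∈ uv}, B ≠ (D : P) := fun D h => hBuv (h ▸ D.2)
  set g1 : {k : L // U ∈ k} → {X : P // X ∈ vb} :=
    fun m => ⟨mkPoint (hmvb m), mt_right _⟩ with hg1def
  set g2 : {X : P // X ∈ vb} → {k : L // O ∈ k} :=
    fun Z => ⟨mkLine (hOZvb Z), jn_left _⟩ with hg2def
  set g3 : {k : L // O ∈ k} → {X : P // X ∈ vr'} :=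
    fun k => ⟨mkPoint (hkvr' k), mt_right _⟩ with hg3def
  set g4 : {X : P // X ∈ vr'} → {k : L // U ∈ k} :=
    fun W => ⟨mkLine (hUWvr' W), jn_left _⟩ with hg4def
  set g5 : {k : L // U ∈ k} → {X : P // X ∈ tV} :=
    fun k => ⟨mkPoint (hktV k), mt_right _⟩ with hg5def
  set g6 : {X : P // X ∈ tV} → {k : L // R' ∈ k} :=
    fun S => ⟨mkLine (hR'StV S), jn_left _⟩ with hg6def
  set g7 : {k : L // R' ∈ k} → {X : P // X ∈ uv} :=
    fun k => ⟨mkPoint (hkuv2 k), mt_right _⟩ with hg7def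
  set g8 : {X : P // X ∈ uv} → {k : L // B ∈ k} :=
    fun D => ⟨mkLine (hBDuv D), jn_left _⟩ with hg8def
  set σ : {k : L // U ∈ k} → {k : L // B ∈ k} :=
    g8 ∘ (g7 ∘ (g6 ∘ (g5 ∘ (g4 ∘ (g3 ∘ (g2 ∘ g1)))))) with hσdef
  have hσproj : IsProj P L (.pencil U) (.pencil B) σ :=
    .comp (.comp (.comp (.comp (.comp (.comp (.comp
      (.elem ⟨hUvb, fun m => mt_left _⟩)
      (.elemInv ⟨hOvb, fun Z => jn_right _⟩))
      (.elem ⟨hOvr', fun k => mt_left _⟩))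
      (.elemInv ⟨hUvr', fun W => jn_right _⟩))
      (.elem ⟨hUtV, fun k => mt_left _⟩))
      (.elemInv ⟨hR'tV, fun S => jn_right _⟩))
      (.elem ⟨hR'uv, fun k => mt_left _⟩))
      (.elemInv ⟨hBuv, fun D => jn_right _⟩)
  set Xf : {k : L // U ∈ k} → P := fun m => mkPoint (hnp m) with hXfdef
  have hXfm : ∀ m : {k : L // U ∈ k}, Xf m ∈ (m : L) := fun m => mt_right _
  have hXfπ : ∀ m : {k : L // U ∈ k}, Xf m ∈ ((π m : {k : L // V ∈ k}) : L) := fun m => mt_left _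
  have hXfκ : ∀ m : {k : L // U ∈ k}, Xf m ∈ conicSet P L U V π := fun m => ⟨m, hXfm m, hXfπ m⟩
  have hBσ : ∀ m : {k : L // U ∈ k}, B ∈ ((σ m : {k : L // B ∈ k}) : L) := fun m => (σ m).2
  have hDσ : ∀ m : {k : L // U ∈ k}, ((g7 (g6 (g5 (g4 (g3 (g2 (g1 m)))))) : {X : P // X ∈ uv}) : P) ∈
      ((σ m : {k : L // B ∈ k}) : L) := fun m => jn_right _
  have keymem : ∀ m : {k : L // U ∈ k}, Xf m ∈ ((σ m : {k : L // B ∈ k}) : L) := by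
    intro m
    by_cases hcB : B ∈ (m : L)
    · have hm : m = ⟨ub, hUub⟩ := Subtype.ext (line_eq hUB m.2 hcB hUub hBub)
      subst hm
      have h1 : Xf ⟨ub, hUub⟩ = B :=
        pt_eq hubvb (hXfm ⟨ub, hUub⟩) (meml hπub (hXfπ ⟨ub, hUub⟩)) hBub hBvb
      rw [h1]; exact hBσ _
    by_cases hmuv : (m : L) = uv
    · have hm : m = ⟨uv, huvU⟩ := Subtype.ext hmuv
      subst hm
      have hXfV : Xf ⟨uv, huvU⟩ = V := pt_eq htVuv (hXfπ ⟨uv, huvU⟩) (hXfm ⟨uv, huvU⟩) hVtV huvV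
      have hp2 : (mkPoint (hmvb ⟨uv, huvU⟩) : P) = V := mt_eq _ huvV hVvb
      have hVl2 : V ∈ (mkLine (hOZvb (g1 ⟨uv, huvU⟩)) : L) :=
        memp hp2 (jn_right (hOZvb (g1 ⟨uv, huvU⟩)))
      have hl2tV : (mkLine (hOZvb (g1 ⟨uv, huvU⟩)) : L) = tV :=
        line_eq hOV (jn_left _) hVl2 hOtV hVtV
      have hppV : (mkPoint (hkvr' (g2 (g1 ⟨uv, huvU⟩))) : P) = V :=
        pt_eq htVvr' (meml hl2tV (mt_left (hkvr' (g2 (g1 ⟨uv, huvU⟩)))))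
          (mt_right _) hVtV hVvr'
      have hVk4 : V ∈ (mkLine (hUWvr' (g3 (g2 (g1 ⟨uv, huvU⟩)))) : L) :=
        memp hppV (jn_right (hUWvr' (g3 (g2 (g1 ⟨uv, huvU⟩)))))
      have hk4uv : (mkLine (hUWvr' (g3 (g2 (g1 ⟨uv, huvU⟩)))) : L) = uv :=
        line_eq hUV (jn_left _) hVk4 huvU huvV
      have hs2V : (mkPoint (hktV (g4 (g3 (g2 (g1 ⟨uv, huvU⟩))))) : P) = V :=
        pt_eq (Ne.symm htVuv) (meml hk4uv (mt_left (hktV (g4 (g3 (g2 (g1 ⟨uv, huvU⟩)))))))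
          (mt_right _) huvV hVtV
      have hVk6 : V ∈ (mkLine (hR'StV (g5 (g4 (g3 (g2 (g1 ⟨uv, huvU⟩)))))) : L) :=
        memp hs2V (jn_right (hR'StV (g5 (g4 (g3 (g2 (g1 ⟨uv, huvU⟩)))))))
      have hk6vr : (mkLine (hR'StV (g5 (g4 (g3 (g2 (g1 ⟨uv, huvU⟩)))))) : L) = vr' :=
        line_eq hVR' hVk6 (jn_left _) hVvr' hR'vr'
      have hd'V : ((g7 (g6 (g5 (g4 (g3 (g2 (g1 ⟨uv, huvU⟩))))))
          : {X : P // X ∈ uv}) : P) = V :=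
        pt_eq hvr'uv (meml hk6vr (mt_left (hkuv2 (g6 (g5 (g4 (g3 (g2 (g1 ⟨uv, huvU⟩)))))))))
          (mt_right _) hVvr' huvV
      exact memp (hd'V.trans hXfV.symm) (hDσ ⟨uv, huvU⟩)
    by_cases hmtU : (m : L) = tU
    · have hm : m = ⟨tU, hUtU⟩ := Subtype.ext hmtU
      subst hm
      have hXfU : Xf ⟨tU, hUtU⟩ = U :=
        pt_eq htUuv (hXfm ⟨tU, hUtU⟩)
          (meml (congrArg Subtype.val hπtU) (hXfπ ⟨tU, hUtU⟩)) hUtU huvU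
      have hZsl2 : Zs ∈ (mkLine (hOZvb (g1 ⟨tU, hUtU⟩)) : L) := jn_right _
      have hl2tU : (mkLine (hOZvb (g1 ⟨tU, hUtU⟩)) : L) = tU :=
        line_eq (show O ≠ Zs from fun h => hOvb (h ▸ hZsvb)) (jn_left _) hZsl2 hOtU hZstU
      have hpptU : (mkPoint (hkvr' (g2 (g1 ⟨tU, hUtU⟩))) : P) ∈ tU :=
        meml hl2tU (mt_left (hkvr' (g2 (g1 ⟨tU, hUtU⟩))))
      have hk4tU : (mkLine (hUWvr' (g3 (g2 (g1 ⟨tU, hUtU⟩)))) : L) = tU :=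
        line_eq (hUWvr' _) (jn_left _) (jn_right _) hUtU hpptU
      have hs2O : (mkPoint (hktV (g4 (g3 (g2 (g1 ⟨tU, hUtU⟩))))) : P) = O :=
        pt_eq htUtV (meml hk4tU (mt_left (hktV (g4 (g3 (g2 (g1 ⟨tU, hUtU⟩)))))))
          (mt_right _) hOtU hOtV
      have hOk6 : O ∈ (mkLine (hR'StV (g5 (g4 (g3 (g2 (g1 ⟨tU, hUtU⟩)))))) : L) :=
        memp hs2O (jn_right (hR'StV (g5 (g4 (g3 (g2 (g1 ⟨tU, hUtU⟩)))))))
      have hk6ou : (mkLine (hR'StV (g5 (g4 (g3 (g2 (g1 ⟨tU, hUtU⟩)))))) : L) = ou :=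
        line_eq hR'O (jn_left _) hOk6 hR'ou hOou
      have hd'U : ((g7 (g6 (g5 (g4 (g3 (g2 (g1 ⟨tU, hUtU⟩))))))
          : {X : P // X ∈ uv}) : P) = U :=
        pt_eq houuv (meml hk6ou (mt_left (hkuv2 (g6 (g5 (g4 (g3 (g2 (g1 ⟨tU, hUtU⟩)))))))))
          (mt_right _) hUou huvU
      exact memp (hd'U.trans hXfU.symm) (hDσ ⟨tU, hUtU⟩)
    · -- generic case: the Desargues uniqueness of the harmonic construction
      have hp2m : (mkPoint (hmvb m) : P) ∈ (m : L) := mt_left _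
      have hp2vb : (mkPoint (hmvb m) : P) ∈ vb := mt_right _
      have hp1π : (mkPoint (hπmub m) : P) ∈ ((π m : {k : L // V ∈ k}) : L) := mt_left _
      have hp1ub : (mkPoint (hπmub m) : P) ∈ ub := mt_right _
      have hOl2 : O ∈ (mkLine (hOZvb (g1 m)) : L) := jn_left _
      have hp2l2 : (mkPoint (hmvb m) : P) ∈ (mkLine (hOZvb (g1 m)) : L) := jn_right _
      have hOp2 : O ≠ (mkPoint (hmvb m) : P) := fun h => hOvb (h ▸ mt_right (hmvb m))
      have hp1l2 : (mkPoint (hπmub m) : P) ∈ (mkLine (hOZvb (g1 m)) : L) :=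
        col_in (crossO m) hOp2 hOl2 hp2l2
      have hp1U : (mkPoint (hπmub m) : P) ≠ U := by
        intro h
        have h1 : U ∈ ((π m : {k : L // V ∈ k}) : L) := h ▸ hp1π
        have h2 : ((π m : {k : L // V ∈ k}) : L) = uv := line_eq hUV h1 (π m).2 huvU huvV
        have h3 : π m = ⟨uv, huvV⟩ := Subtype.ext h2
        have h4 : m = ⟨tU, hUtU⟩ := by
          have h5 := hlinv m
          rw [h3, ← hsubtU] at h5
          exact h5.symm
        exact hmtU (congrArg Subtype.val h4)
      have hUl2 : U ∉ (mkLine (hOZvb (g1 m)) : L) := by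
        intro h
        have h1 : (mkLine (hOZvb (g1 m)) : L) = ub :=
          line_eq (Ne.symm hp1U) h hp1l2 hUub hp1ub
        exact hOub (h1 ▸ hOl2)
      have hp2V : (mkPoint (hmvb m) : P) ≠ V := by
        intro h
        have h1 : V ∈ (m : L) := h ▸ hp2m
        exact hmuv (line_eq hUV m.2 h1 huvU huvV)
      have hVl2 : V ∉ (mkLine (hOZvb (g1 m)) : L) := by
        intro h
        have h1 : (mkLine (hOZvb (g1 m)) : L) = vb :=
          line_eq (Ne.symm hp2V) h hp2l2 hVvb hp2vb
        exact hOvb (h1 ▸ hOl2)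
      have hp2B : (mkPoint (hmvb m) : P) ≠ B := fun h => hcB (h ▸ hp2m)
      have hBl2 : B ∉ (mkLine (hOZvb (g1 m)) : L) := by
        intro h
        have h1 : (mkLine (hOZvb (g1 m)) : L) = vb :=
          line_eq (Ne.symm hp2B) h hp2l2 hBvb hp2vb
        exact hOvb (h1 ▸ hOl2)
      have hR'l2 : R' ∉ (mkLine (hOZvb (g1 m)) : L) := by
        intro h
        have h1 : (mkLine (hOZvb (g1 m)) : L) = ou :=
          line_eq (show O ≠ R' from Ne.symm hR'O) hOl2 h hOou hR'ou
        have h2 : (mkPoint (hmvb m) : P) ∈ ou := meml h1 hp2l2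
        have h3 : (mkPoint (hmvb m) : P) = Zs := pt_eq houvb h2 hp2vb hZsou hZsvb
        have h4 : Zs ∈ (m : L) := h3 ▸ hp2m
        exact hmtU (line_eq hZsU h4 m.2 hZstU hUtU)
      have hppl2 : (mkPoint (hkvr' (g2 (g1 m))) : P) ∈ (mkLine (hOZvb (g1 m)) : L) :=
        mt_left _
      have hppvr' : (mkPoint (hkvr' (g2 (g1 m))) : P) ∈ vr' := mt_right _
      have hUk4 : U ∈ (mkLine (hUWvr' (g3 (g2 (g1 m)))) : L) := jn_left _
      have hppk4 : (mkPoint (hkvr' (g2 (g1 m))) : P) ∈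
          (mkLine (hUWvr' (g3 (g2 (g1 m)))) : L) := jn_right _
      have hs2k4 : (mkPoint (hktV (g4 (g3 (g2 (g1 m))))) : P) ∈
          (mkLine (hUWvr' (g3 (g2 (g1 m)))) : L) := mt_left _
      have hs2tV : (mkPoint (hktV (g4 (g3 (g2 (g1 m))))) : P) ∈ tV := mt_right _
      have hR'k6 : R' ∈ (mkLine (hR'StV (g5 (g4 (g3 (g2 (g1 m)))))) : L) := jn_left _
      have hs2k6 : (mkPoint (hktV (g4 (g3 (g2 (g1 m))))) : P) ∈
          (mkLine (hR'StV (g5 (g4 (g3 (g2 (g1 m)))))) : L) := jn_right _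
      have hd'k6 : ((g7 (g6 (g5 (g4 (g3 (g2 (g1 m)))))) : {X : P // X ∈ uv}) : P) ∈
          (mkLine (hR'StV (g5 (g4 (g3 (g2 (g1 m)))))) : L) := mt_left _
      have hd'uv : ((g7 (g6 (g5 (g4 (g3 (g2 (g1 m)))))) : {X : P // X ∈ uv}) : P) ∈ uv :=
        mt_right _
      have hBXf : B ≠ Xf m := fun h => hcB (by rw [h]; exact hXfm m)
      have hbxuv : (mkLine hBXf : L) ≠ uv := fun h => hBuv (h ▸ jn_left hBXf)
      have hG := samel_unique hdes h8 hUV huvU huvV hUl2 hVl2 hBuv hBl2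
        hp2l2 ⟨vb, hVvb, hBvb, hp2vb⟩ hp1l2 ⟨ub, hUub, hBub, hp1ub⟩
        ⟨(m : L), m.2, hp2m, hXfm m⟩
        ⟨((π m : {k : L // V ∈ k}) : L), (π m).2, hp1π, hXfπ m⟩
        (mt_right hbxuv) ⟨mkLine hBXf, jn_left _, jn_right _, mt_left _⟩
        hR'uv hR'l2
        hppl2 ⟨vr', hVvr', hR'vr', hppvr'⟩ hOl2 ⟨ou, hUou, hR'ou, hOou⟩
        ⟨mkLine (hUWvr' (g3 (g2 (g1 m)))), hUk4, hppk4, hs2k4⟩ ⟨tV, hVtV, hOtV, hs2tV⟩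
        hd'uv ⟨mkLine (hR'StV (g5 (g4 (g3 (g2 (g1 m)))))), hR'k6, hs2k6, hd'k6⟩
      have hd'bx : ((g7 (g6 (g5 (g4 (g3 (g2 (g1 m)))))) : {X : P // X ∈ uv}) : P) ∈
          (mkLine hBXf : L) := memp hG (mt_left hbxuv)
      have hσbx : ((σ m : {k : L // B ∈ k}) : L) = mkLine hBXf :=
        line_eq (hBDuv _) (hBσ m) (hDσ m) (jn_left hBXf) hd'bx
      exact meml hσbx.symm (jn_right hBXf)
  have hσne : ∀ m : {k : L // U ∈ k}, ((σ m : {k : L // B ∈ k}) : L) ≠ (m : L) := by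
    intro m h
    have hBm : B ∈ (m : L) := meml h (hBσ m)
    have hm : m = ⟨ub, hUub⟩ := Subtype.ext (line_eq hUB m.2 hBm hUub hBub)
    subst hm
    have hd'ub : ((g7 (g6 (g5 (g4 (g3 (g2 (g1 ⟨ub, hUub⟩)))))) : {X : P // X ∈ uv}) : P)
        ∈ ub := meml h (hDσ ⟨ub, hUub⟩)
    have hd'U : ((g7 (g6 (g5 (g4 (g3 (g2 (g1 ⟨ub, hUub⟩)))))) : {X : P // X ∈ uv}) : P)
        = U := pt_eq huvub (mt_right _) hd'ub huvU hUub
    have hp2B : (mkPoint (hmvb ⟨ub, hUub⟩) : P) = B := mt_eq _ hBub hBvb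
    have hUk6 : U ∈ (mkLine (hR'StV (g5 (g4 (g3 (g2 (g1 ⟨ub, hUub⟩)))))) : L) :=
      memp hd'U (mt_left _)
    have hk6ou : (mkLine (hR'StV (g5 (g4 (g3 (g2 (g1 ⟨ub, hUub⟩)))))) : L) = ou :=
      line_eq hR'U (jn_left _) hUk6 hR'ou hUou
    have hs2ou : (mkPoint (hktV (g4 (g3 (g2 (g1 ⟨ub, hUub⟩))))) : P) ∈ ou :=
      meml hk6ou (jn_right _)
    have hs2O : (mkPoint (hktV (g4 (g3 (g2 (g1 ⟨ub, hUub⟩))))) : P) = O :=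
      pt_eq houtV hs2ou (mt_right _) hOou hOtV
    have hOk4 : O ∈ (mkLine (hUWvr' (g3 (g2 (g1 ⟨ub, hUub⟩)))) : L) :=
      memp hs2O (mt_left _)
    have hk4ou : (mkLine (hUWvr' (g3 (g2 (g1 ⟨ub, hUub⟩)))) : L) = ou :=
      line_eq (Ne.symm hOU) (jn_left _) hOk4 hUou hOou
    have hppou : (mkPoint (hkvr' (g2 (g1 ⟨ub, hUub⟩))) : P) ∈ ou :=
      meml hk4ou (jn_right _)
    have hBl2 : B ∈ (mkLine (hOZvb (g1 ⟨ub, hUub⟩)) : L) := memp hp2B (jn_right _)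
    have hl2ou : (mkLine (hOZvb (g1 ⟨ub, hUub⟩)) : L) ≠ ou := by
      intro he
      have h1 : B ∈ ou := meml he hBl2
      have h2 : ou = ub := line_eq hUB hUou h1 hUub hBub
      exact hOub (h2 ▸ hOou)
    have hppO : (mkPoint (hkvr' (g2 (g1 ⟨ub, hUub⟩))) : P) = O :=
      pt_eq hl2ou (mt_left _) hppou (jn_left _) hOou
    exact hOvr' (memp hppO (mt_right _))
  have hconic : conicSet P L U V π = conicSet P L U B σ := by
    ext X
    constructor
    · rintro ⟨k, hXk, hXπ⟩
      have hXeq : X = Xf k := pt_eq (hnp k) hXπ hXk (mt_left _) (mt_right _)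
      exact ⟨k, hXk, by rw [hXeq]; exact keymem k⟩
    · rintro ⟨k, hXk, hXσ⟩
      have hXeq : X = Xf k := pt_eq (hσne k) hXσ hXk (keymem k) (hXfm k)
      rw [hXeq]
      exact hXfκ k
  exact ⟨hUB, σ, hσproj, hσne, hκ.trans hconic⟩

end PQAux
namespace PQAux

open Configuration Configuration.Nondegenerate Configuration.HasLines Configuration.HasPoints

variable {P L : Type u} [Membership P L] [Configuration.ProjectivePlane P L]

/-- Steiner's theorem: a conic can be presented from any two of its points. -/
lemma steiner (hdes : DesarguesProperty P L) (h8 : LinesHaveAtLeast P L 8)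
    (hT : AxiomT P L) {κ : Set P} {U V A B : P}
    (hp : Pres L κ U V) (hA : A ∈ κ) (hB : B ∈ κ) (hAB : A ≠ B) : Pres L κ A B := by
  by_cases hBU : B = U
  · subst hBU
    exact swap_pres (replace_pres hdes h8 hT hp hA hAB)
  · have h1 : Pres L κ U B := replace_pres hdes h8 hT hp hB hBU
    have h2 : Pres L κ B U := swap_pres h1
    exact swap_pres (replace_pres hdes h8 hT h2 hA hAB)

end PQAux

open PQAux Configuration.HasLines Configuration.HasPoints

/-- **Quadrangle construction of the polar.** Let `κ` be a conic and let `Pt`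
be a point lying outside `κ` (distinct from every point of `κ`).  Let
`E₁, E₂, E₃, E₄` be four distinct points of `κ` forming a quadrangle inscribed
in `κ` with `Pt` as one of its diagonal points, say `Pt = E₁E₂·E₃E₄`.  Then the
polar of `Pt` with respect to `κ` is the line joining the other two diagonal
points `E₁E₃·E₂E₄` and `E₁E₄·E₂E₃`. -/
theorem polar_quadrangle
    [Configuration.ProjectivePlane P L]
    (hdes : DesarguesProperty P L) (hfano : FanoAxiom P L)
    (h8 : LinesHaveAtLeast P L 8) (hT : AxiomT P L) (hAxP : AxiomP P L)
    (κ : Set P) (hκ : IsConic P L κ)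
    (Pt : P) (hPout : ∀ X ∈ κ, Pt ≠ X)
    (E₁ E₂ E₃ E₄ : P)
    (hE₁κ : E₁ ∈ κ) (hE₂κ : E₂ ∈ κ) (hE₃κ : E₃ ∈ κ) (hE₄κ : E₄ ∈ κ)
    (h12 : E₁ ≠ E₂) (h13 : E₁ ≠ E₃) (h14 : E₁ ≠ E₄)
    (h23 : E₂ ≠ E₃) (h24 : E₂ ≠ E₄) (h34 : E₃ ≠ E₄)
    (e12 e34 : L) (hE₁e : E₁ ∈ e12) (hE₂e : E₂ ∈ e12) (hE₃e : E₃ ∈ e34) (hE₄e : E₄ ∈ e34)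
    (hP12 : Pt ∈ e12) (hP34 : Pt ∈ e34) :
    ∀ D₁ D₂ : P,
      Col P L E₁ E₃ D₁ → Col P L E₂ E₄ D₁ →
      Col P L E₁ E₄ D₂ → Col P L E₂ E₃ D₂ →
      D₁ ≠ D₂ ∧ ∀ p : L, D₁ ∈ p → D₂ ∈ p → IsPolar P L κ Pt p := by
  intro D₁ D₂ hD₁a hD₁b hD₂a hD₂b
  obtain ⟨U, V, π, hUV, hπ, hnp, hκc⟩ := hκ
  have hpres : Pres L κ U V := ⟨hUV, π, hπ, hnp, hκc⟩
  have h123 : ¬ Col P L E₁ E₂ E₃ := conic_not3col hT hpres hE₁κ hE₂κ hE₃κ h12 h13 h23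
  have h124 : ¬ Col P L E₁ E₂ E₄ := conic_not3col hT hpres hE₁κ hE₂κ hE₄κ h12 h14 h24
  have h134 : ¬ Col P L E₁ E₃ E₄ := conic_not3col hT hpres hE₁κ hE₃κ hE₄κ h13 h14 h34
  have h234 : ¬ Col P L E₂ E₃ E₄ := conic_not3col hT hpres hE₂κ hE₃κ hE₄κ h23 h24 h34
  have hPD : ¬ Col P L Pt D₁ D₂ :=
    hfano E₁ E₂ E₃ E₄ Pt D₁ D₂ h123 h124 h134 h234 ⟨e12, hE₁e, hE₂e, hP12⟩
      ⟨e34, hE₃e, hE₄e, hP34⟩ hD₁a hD₁b hD₂a hD₂b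
  have hD12 : D₁ ≠ D₂ := by
    intro h
    subst h
    apply hPD
    by_cases hPtD : Pt = D₁
    · exact ⟨e12, hP12, hPtD ▸ hP12, hPtD ▸ hP12⟩
    · exact ⟨mkLine hPtD, jn_left _, jn_right _, jn_right _⟩
  refine ⟨hD12, ?_⟩
  intro p hD₁p hD₂p
  have hE₃e12 : E₃ ∉ e12 := fun h => h123 ⟨e12, hE₁e, hE₂e, h⟩
  have hE₄e12 : E₄ ∉ e12 := fun h => h124 ⟨e12, hE₁e, hE₂e, h⟩
  have hE₁e34 : E₁ ∉ e34 := fun h => h134 ⟨e34, h, hE₃e, hE₄e⟩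
  have hE₂e34 : E₂ ∉ e34 := fun h => h234 ⟨e34, h, hE₃e, hE₄e⟩
  have he1234 : e12 ≠ e34 := fun h => hE₃e12 (h ▸ hE₃e)
  have hD₁e12 : D₁ ∉ e12 := by
    intro h
    by_cases hD₁E₁ : D₁ = E₁
    · subst hD₁E₁
      obtain ⟨w, hw2, hw4, hw1⟩ := hD₁b
      exact h124 ⟨w, hw1, hw2, hw4⟩
    · obtain ⟨w, hw1, hw3, hwD⟩ := hD₁a
      have hw : w = e12 := line_eq (Ne.symm hD₁E₁) hw1 hwD hE₁e h
      exact hE₃e12 (hw ▸ hw3)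
  have hD₁e34 : D₁ ∉ e34 := by
    intro h
    by_cases hD₁E₄ : D₁ = E₄
    · subst hD₁E₄
      obtain ⟨w, hw1, hw3, hw4⟩ := hD₁a
      exact h134 ⟨w, hw1, hw3, hw4⟩
    · obtain ⟨w, hw2, hw4, hwD⟩ := hD₁b
      have hw : w = e34 := line_eq (Ne.symm hD₁E₄) hw4 hwD hE₄e h
      exact hE₂e34 (hw ▸ hw2)
  have hq' : e12 ≠ p := fun h => hD₁e12 (by rw [h]; exact hD₁p)
  have hharm : IsHarmonic P L E₁ E₂ Pt (mkPoint hq') := by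
    refine ⟨h12, e12, e34, D₁, E₄, E₃, D₂, hE₁e, hE₂e, hP12, hP34, Ne.symm he1234,
      hD₁e12, hD₁e34, hE₄e, ?_, hE₃e, ?_, hD₂a, hD₂b, mt_left hq', ⟨p, hD₁p, hD₂p, mt_right hq'⟩⟩
    · obtain ⟨w, hw2, hw4, hwD⟩ := hD₁b
      exact ⟨w, hw2, hwD, hw4⟩
    · obtain ⟨w, hw1, hw3, hwD⟩ := hD₁a
      exact ⟨w, hw1, hwD, hw3⟩
  obtain ⟨hE12', σ, hσ, hσnp, hκσ⟩ := steiner hdes h8 hT hpres hE₁κ hE₂κ h12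
  obtain ⟨σ', hσ', hlinv, hrinv⟩ := proj_inv hσ
  set t₁ : L := ((σ' ⟨e12, hE₂e⟩ : {k : L // E₁ ∈ k}) : L) with ht₁def
  set t₂ : L := ((σ ⟨e12, hE₁e⟩ : {k : L // E₂ ∈ k}) : L) with ht₂def
  have hE₁t₁ : E₁ ∈ t₁ := (σ' ⟨e12, hE₂e⟩).2
  have hE₂t₂ : E₂ ∈ t₂ := (σ ⟨e12, hE₁e⟩).2
  have hσt₁ : σ ⟨t₁, hE₁t₁⟩ = ⟨e12, hE₂e⟩ := by
    have h1 : (⟨t₁, hE₁t₁⟩ : {k : L // E₁ ∈ k}) = σ' ⟨e12, hE₂e⟩ := Subtype.ext rfl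
    rw [h1]; exact hrinv _
  have ht₂e12 : t₂ ≠ e12 := hσnp ⟨e12, hE₁e⟩
  have ht₁e12 : t₁ ≠ e12 := by
    intro h
    have h1 : (⟨t₁, hE₁t₁⟩ : {k : L // E₁ ∈ k}) = ⟨e12, hE₁e⟩ := Subtype.ext h
    rw [h1] at hσt₁
    exact hσnp ⟨e12, hE₁e⟩ (congrArg Subtype.val hσt₁)
  have htan₂ : IsTangent P L κ t₂ E₂ := by
    have h := tangent_V hE12' hσ hσnp
    have hsub : (⟨mkLine hE12', jn_left hE12'⟩ : {k : L // E₁ ∈ k}) = ⟨e12, hE₁e⟩ :=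
      Subtype.ext (jn_eq hE12' hE₁e hE₂e)
    rw [hsub] at h
    rwa [← hκσ] at h
  have htan₁ : IsTangent P L κ t₁ E₁ := by
    refine ⟨hE₁κ, hE₁t₁, ?_⟩
    intro X hX hXt₁
    by_contra hXE₁
    have hXκσ : X ∈ conicSet P L E₁ E₂ σ := hκσ ▸ hX
    have hXσt₁ : X ∈ ((σ ⟨t₁, hE₁t₁⟩ : {k : L // E₂ ∈ k}) : L) :=
      conic_mem_π hXκσ hE₁t₁ hXt₁ hXE₁
    have hXe12 : X ∈ e12 := meml (congrArg Subtype.val hσt₁) hXσt₁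
    exact hXE₁ (pt_eq ht₁e12 hXt₁ hXe12 hE₁t₁ hE₁e)
  -- values of σ on the quadrangle lines
  have hσ13 : ((σ ⟨mkLine h13, jn_left h13⟩ : {k : L // E₂ ∈ k}) : L) = mkLine h23 := by
    have h1 : E₃ ∈ ((σ ⟨mkLine h13, jn_left h13⟩ : {k : L // E₂ ∈ k}) : L) :=
      conic_mem_π (hκσ ▸ hE₃κ) (jn_left h13) (jn_right h13) (Ne.symm h13)
    exact line_eq h23 (σ _).2 h1 (jn_left h23) (jn_right h23)
  have hσ14 : ((σ ⟨mkLine h14, jn_left h14⟩ : {k : L // E₂ ∈ k}) : L) = mkLine h24 := by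
    have h1 : E₄ ∈ ((σ ⟨mkLine h14, jn_left h14⟩ : {k : L // E₂ ∈ k}) : L) :=
      conic_mem_π (hκσ ▸ hE₄κ) (jn_left h14) (jn_right h14) (Ne.symm h14)
    exact line_eq h24 (σ _).2 h1 (jn_left h24) (jn_right h24)
  -- the perspectivity from range E₂E₃ to range E₁E₃
  have hE₁g : E₁ ∉ (mkLine h23 : L) := fun h => h123 ⟨mkLine h23, h, jn_left _, jn_right _⟩
  have hE₂f : E₂ ∉ (mkLine h13 : L) := fun h => h123 ⟨mkLine h13, jn_left _, h, jn_right _⟩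
  have hE₁Z : ∀ Z : {X : P // X ∈ (mkLine h23 : L)}, E₁ ≠ (Z : P) :=
    fun Z h => hE₁g (h ▸ Z.2)
  have hkf : ∀ k : {k : L // E₂ ∈ k}, (k : L) ≠ mkLine h13 := fun k h => hE₂f (h ▸ k.2)
  set d1 : {X : P // X ∈ (mkLine h23 : L)} → {k : L // E₁ ∈ k} :=
    fun Z => ⟨mkLine (hE₁Z Z), jn_left _⟩ with hd1def
  set d2 : {k : L // E₂ ∈ k} → {X : P // X ∈ (mkLine h13 : L)} :=
    fun k => ⟨mkPoint (hkf k), mt_right _⟩ with hd2def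
  have hδproj : IsProj P L (.range (mkLine h23)) (.range (mkLine h13)) (d2 ∘ (σ ∘ d1)) :=
    .comp (.comp (.elemInv ⟨hE₁g, fun Z => jn_right _⟩) hσ) (.elem ⟨hE₂f, fun k => mt_left _⟩)
  have hgf : (mkLine h23 : L) ≠ mkLine h13 := fun h => hE₁g (meml h.symm (jn_left h13))
  have hE₃g : E₃ ∈ (mkLine h23 : L) := jn_right _
  have hE₃f : E₃ ∈ (mkLine h13 : L) := jn_right _
  have hfix : (((d2 ∘ (σ ∘ d1)) ⟨E₃, hE₃g⟩ : {X : P // X ∈ (mkLine h13 : L)}) : P) = E₃ := by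
    have h1 : d1 ⟨E₃, hE₃g⟩ = ⟨mkLine h13, jn_left h13⟩ :=
      Subtype.ext (line_eq h13 (jn_left _) (jn_right _) (jn_left h13) (jn_right h13))
    show ((d2 (σ (d1 ⟨E₃, hE₃g⟩))) : P) = E₃
    rw [h1]
    exact mt_eq (hkf _) (meml hσ13.symm (jn_right h23)) hE₃f
  obtain ⟨Q, hQg, hQf, hQcol⟩ := lemmaA hT h8 hgf hδproj hE₃g hE₃f hfix
  -- Q lies on p
  have hD₂g : D₂ ∈ (mkLine h23 : L) := col_in hD₂b h23 (jn_left _) (jn_right _)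
  have hD₁f : D₁ ∈ (mkLine h13 : L) := col_in hD₁a h13 (jn_left _) (jn_right _)
  have hD₂E₁ : E₁ ≠ D₂ := fun h => hE₁g (h ▸ hD₂g)
  have hD₂14 : D₂ ∈ (mkLine h14 : L) := col_in hD₂a h14 (jn_left _) (jn_right _)
  have hD₁24 : D₁ ∈ (mkLine h24 : L) := col_in hD₁b h24 (jn_left _) (jn_right _)
  have hQp : Q ∈ p := by
    have hcolD := hQcol ⟨D₂, hD₂g⟩
    have h1 : d1 ⟨D₂, hD₂g⟩ = ⟨mkLine h14, jn_left h14⟩ :=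
      Subtype.ext (line_eq hD₂E₁ (jn_left _) (jn_right _) (jn_left h14) hD₂14)
    have h2 : (d2 ∘ (σ ∘ d1)) ⟨D₂, hD₂g⟩ = ⟨D₁, hD₁f⟩ := by
      show d2 (σ (d1 ⟨D₂, hD₂g⟩)) = _
      rw [h1]
      exact Subtype.ext (mt_eq (hkf _) (meml hσ14.symm hD₁24) hD₁f)
    rw [h2] at hcolD
    exact col_mem_line hcolD (Ne.symm hD12) hD₂p hD₁p
  -- Q lies on t₁
  have ht₁g : t₁ ≠ mkLine h23 := fun h => hE₁g (h ▸ hE₁t₁)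
  have hQt₁ : Q ∈ t₁ := by
    have hZ₁g : (mkPoint ht₁g : P) ∈ (mkLine h23 : L) := mt_right _
    have hZ₁t₁ : (mkPoint ht₁g : P) ∈ t₁ := mt_left _
    have hZ₁E₁ : (mkPoint ht₁g : P) ≠ E₁ := fun h => hE₁g (h ▸ hZ₁g)
    have hcolZ := hQcol ⟨mkPoint ht₁g, hZ₁g⟩
    have h1 : d1 ⟨mkPoint ht₁g, hZ₁g⟩ = ⟨t₁, hE₁t₁⟩ :=
      Subtype.ext (line_eq (Ne.symm hZ₁E₁) (jn_left _) (jn_right _) hE₁t₁ hZ₁t₁)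
    have h2 : (d2 ∘ (σ ∘ d1)) ⟨mkPoint ht₁g, hZ₁g⟩ = ⟨E₁, jn_left h13⟩ := by
      show d2 (σ (d1 ⟨mkPoint ht₁g, hZ₁g⟩)) = _
      rw [h1, hσt₁]
      exact Subtype.ext (mt_eq (hkf _) hE₁e (jn_left h13))
    rw [h2] at hcolZ
    exact col_mem_line hcolZ hZ₁E₁ hZ₁t₁ hE₁t₁
  -- Q lies on t₂
  have hE₂g : E₂ ∈ (mkLine h23 : L) := jn_left _
  have hQt₂ : Q ∈ t₂ := by
    have hcolE := hQcol ⟨E₂, hE₂g⟩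
    have h1 : d1 ⟨E₂, hE₂g⟩ = ⟨e12, hE₁e⟩ :=
      Subtype.ext (line_eq h12 (jn_left _) (jn_right _) hE₁e hE₂e)
    have hW₂t₂ : ((d2 (σ (d1 ⟨E₂, hE₂g⟩))) : P) ∈ t₂ := by
      rw [h1]
      exact mt_left (hkf _)
    have hW₂f : ((d2 (σ (d1 ⟨E₂, hE₂g⟩))) : P) ∈ (mkLine h13 : L) := (d2 _).2
    have hW₂E₂ : E₂ ≠ ((d2 (σ (d1 ⟨E₂, hE₂g⟩))) : P) := fun h => hE₂f (h ▸ hW₂f)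
    exact col_mem_line hcolE hW₂E₂ hE₂t₂ hW₂t₂
  -- Q ≠ Q'
  have hQE₁ : Q ≠ E₁ := fun h => hQf (memp h.symm (jn_left h13))
  have hQe12 : Q ∉ e12 := by
    intro h
    exact hQE₁ (pt_eq ht₁e12 hQt₁ h hE₁t₁ hE₁e)
  have hQQ' : Q ≠ mkPoint hq' := fun h => hQe12 (h ▸ mt_left hq')
  exact ⟨e12, t₁, t₂, E₁, E₂, Q, mkPoint hq', hP12, h12, hE₁κ, hE₂κ, hE₁e, hE₂e,
    htan₁, htan₂, hQt₁, hQt₂, hharm, hQQ', hQp, mt_right hq'⟩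
end
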